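/- arXiv:2406.03696 — 7 statements merged into one kernel-verified Lean document; each statement's English description precedes it below -/
import Mathlib

section
/- The sample cross-covariance matrix Z = (1/n)X̃ᵀX of the modified features with the original features is a symmetric matrix (hence all its eigenvalues are real), and moreover Range(Z) ⊆ Range(X̃ᵀ) ⊆ Range(Xᵀ), where Range(·) denotes the column space of a matrix. -/
open Matrix Finset

noncomputable section

namespace MiniBatchGD

variable {p B m : ℕ}

/-- The product `∏_{j < τ⁻¹(b)} (I - α W_{τ(j)})`, with factors ordered by decreasing
position `j` (the factor with largest `j` leftmost); the empty product is `I`. -/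
def prodBefore (α : ℝ) (W : Fin B → Matrix (Fin p) (Fin p) ℝ)
    (τ : Equiv.Perm (Fin B)) (b : Fin B) : Matrix (Fin p) (Fin p) ℝ :=
  ((((List.finRange B).filter (fun j => j < τ.symm b)).reverse).map
      (fun j => (1 : Matrix (Fin p) (Fin p) ℝ) - α • W (τ j))).prod

/-- The product `∏_{j > τ⁻¹(b)} (I - α W_{τ(j)})`, with factors ordered by decreasing
position `j`; the empty product is `I`. -/
def prodAfter (α : ℝ) (W : Fin B → Matrix (Fin p) (Fin p) ℝ)
    (τ : Equiv.Perm (Fin B)) (b : Fin B) : Matrix (Fin p) (Fin p) ℝ :=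
  ((((List.finRange B).filter (fun j => τ.symm b < j)).reverse).map
      (fun j => (1 : Matrix (Fin p) (Fin p) ℝ) - α • W (τ j))).prod

/-- The whole-epoch product `∏_{b=1}^{B} (I - α W_{τ(b)})`, factors ordered by
decreasing position. -/
def prodAll (α : ℝ) (W : Fin B → Matrix (Fin p) (Fin p) ℝ)
    (τ : Equiv.Perm (Fin B)) : Matrix (Fin p) (Fin p) ℝ :=
  (((List.finRange B).reverse).map
      (fun j => (1 : Matrix (Fin p) (Fin p) ℝ) - α • W (τ j))).prod

/-- `Π_b := (1/B!) ∑_{τ ∈ S_B} ∏_{j < τ⁻¹(b)} (I - α W_{τ(j)})`. -/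
def Pib (α : ℝ) (W : Fin B → Matrix (Fin p) (Fin p) ℝ) (b : Fin B) :
    Matrix (Fin p) (Fin p) ℝ :=
  ((B.factorial : ℝ))⁻¹ • ∑ τ : Equiv.Perm (Fin B), prodBefore α W τ b

/-- The `b`-th mini-batch of rows of `X`. -/
def batch (X : Matrix (Fin B × Fin m) (Fin p) ℝ) (b : Fin B) : Matrix (Fin m) (Fin p) ℝ :=
  Matrix.of fun i j => X (b, i) j

/-- The sample covariance `W_b = (B/n) X_bᵀ X_b` of the `b`-th mini-batch (`n = B m`). -/
def Wb (X : Matrix (Fin B × Fin m) (Fin p) ℝ) (b : Fin B) : Matrix (Fin p) (Fin p) ℝ :=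
  ((B : ℝ) / ((B * m : ℕ) : ℝ)) • ((batch X b)ᵀ * batch X b)

/-- The modified feature matrix `X̃`, whose `b`-th block of rows is `X̃_b = X_b Π_b`. -/
def Xtilde (α : ℝ) (X : Matrix (Fin B × Fin m) (Fin p) ℝ) :
    Matrix (Fin B × Fin m) (Fin p) ℝ :=
  Matrix.of fun bi j => (batch X bi.1 * Pib α (Wb X) bi.1) bi.2 j

/-- The sample cross-covariance matrix `Z = (1/n) X̃ᵀ X`. -/
def Zmat (α : ℝ) (X : Matrix (Fin B × Fin m) (Fin p) ℝ) : Matrix (Fin p) (Fin p) ℝ :=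
  (((B * m : ℕ) : ℝ))⁻¹ • ((Xtilde α X)ᵀ * X)

/-- One mini-batch gradient step with step size `α` on batch `b`:
`β ← β - (Bα/n) X_bᵀ (X_b β - y_b)`. -/
def step (α : ℝ) (X : Matrix (Fin B × Fin m) (Fin p) ℝ) (y : Fin B × Fin m → ℝ)
    (b : Fin B) (β : Fin p → ℝ) : Fin p → ℝ :=
  β - ((B : ℝ) * α / ((B * m : ℕ) : ℝ)) •
    ((batch X b)ᵀ *ᵥ (batch X b *ᵥ β - fun i => y (b, i)))

/-- One epoch of mini-batch gradient descent using the mini-batches in the order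
given by the permutation `τ`. -/
def epoch (α : ℝ) (X : Matrix (Fin B × Fin m) (Fin p) ℝ) (y : Fin B × Fin m → ℝ)
    (τ : Equiv.Perm (Fin B)) (β : Fin p → ℝ) : Fin p → ℝ :=
  (List.finRange B).foldl (fun β j => step α X y (τ j) β) β

/-- The mean iterate `β̄_k` of mini-batch gradient descent with random reshuffling:
since each epoch map is affine in `β` and the permutations of distinct epochs are
independent and uniform, the mean iterate satisfies
`β̄_k = (1/B!) ∑_{τ ∈ S_B} epoch_τ (β̄_{k-1})`. -/
def meanIter (α : ℝ) (X : Matrix (Fin B × Fin m) (Fin p) ℝ) (y : Fin B × Fin m → ℝ)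
    (β₀ : Fin p → ℝ) : ℕ → Fin p → ℝ
  | 0 => β₀
  | k + 1 => ((B.factorial : ℝ))⁻¹ •
      ∑ τ : Equiv.Perm (Fin B), epoch α X y τ (meanIter α X y β₀ k)

/-- `Ad` is the Moore–Penrose pseudoinverse of `A`. -/
def IsMoorePenrose {n₁ n₂ : Type*} [Fintype n₁] [Fintype n₂]
    (A : Matrix n₁ n₂ ℝ) (Ad : Matrix n₂ n₁ ℝ) : Prop :=
  A * Ad * A = A ∧ Ad * A * Ad = Ad ∧ (A * Ad)ᵀ = A * Ad ∧ (Ad * A)ᵀ = Ad * A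

end MiniBatchGD

open MiniBatchGD

section Helpers

open MiniBatchGD

variable {p B : ℕ}

local notation "Mat" => Matrix (Fin p) (Fin p) ℝ

lemma filter_range_lt (n k : ℕ) (h : k ≤ n) :
    (List.range n).filter (fun j => decide (j < k)) = List.range k := by
  induction n with
  | zero => simp [Nat.le_zero.mp h]
  | succ n ih =>
    rcases Nat.lt_or_ge k (n+1) with h1 | h1
    · rw [List.range_succ, List.filter_append, ih (by omega)]
      simp [Nat.not_lt.mpr (by omega : k ≤ n)]
    · have : k = n + 1 := by omega
      subst this
      refine List.filter_eq_self.mpr ?_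
      intro a ha
      simp only [List.mem_range] at ha
      simpa using ha

lemma reverse_range (n : ℕ) :
    (List.range n).reverse = (List.range n).map (fun j => n - 1 - j) := by
  conv_lhs => rw [List.range_eq_range', List.reverse_range']
  simp

lemma sum_matrix_mulVec {ι : Type*} (s : Finset ι) (A : ι → Mat) (x : Fin p → ℝ) :
    (∑ τ ∈ s, A τ) *ᵥ x = ∑ τ ∈ s, A τ *ᵥ x := by
  ext j
  simp only [Matrix.mulVec, dotProduct, Finset.sum_apply, Matrix.sum_apply,
    Finset.sum_mul]
  rw [Finset.sum_comm]

/-- telescoping, increasing order -/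
lemma telescope_inc (F : ℕ → Mat) (n : ℕ) :
    ∑ k ∈ range n, ((List.range k).map F).prod * (1 - F k)
      = 1 - ((List.range n).map F).prod := by
  induction n with
  | zero => simp
  | succ n ih =>
    rw [Finset.sum_range_succ, ih, List.range_succ, List.map_append, List.prod_append]
    simp [mul_sub, sub_mul]

/-- telescoping, decreasing order -/
lemma telescope_dec (F : ℕ → Mat) (n : ℕ) :
    ∑ k ∈ range n, (1 - F k) * ((List.range k).map F).reverse.prod
      = 1 - ((List.range n).map F).reverse.prod := by
  induction n with
  | zero => simp
  | succ n ih =>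
    rw [Finset.sum_range_succ, ih, List.range_succ, List.map_append, List.reverse_append,
      List.prod_append]
    simp [mul_sub, sub_mul]

/-- the `j`-th factor `1 - α • A j` as a function on `ℕ` -/
def fac (α : ℝ) {p B : ℕ} (A : Fin B → Matrix (Fin p) (Fin p) ℝ) (j : ℕ) :
    Matrix (Fin p) (Fin p) ℝ :=
  if h : j < B then (1 : Matrix (Fin p) (Fin p) ℝ) - α • A ⟨j, h⟩ else 1

lemma fac_transpose {α : ℝ} {A : Fin B → Mat} (hA : ∀ b, (A b)ᵀ = A b) (j : ℕ) :
    (fac α A j)ᵀ = fac α A j := by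
  unfold fac
  split <;> simp [transpose_sub, transpose_smul, hA]

/-- transpose of a product of symmetric factors reverses the order -/
lemma symProd {α : ℝ} {A : Fin B → Mat} (hA : ∀ b, (A b)ᵀ = A b) (l : List ℕ) :
    (((l.map (fac α A)).reverse).prod)ᵀ = (l.map (fac α A)).prod := by
  rw [Matrix.transpose_list_prod, ← List.map_reverse, List.reverse_reverse, List.map_map]
  congr 1
  exact List.map_congr_left fun j _ => fac_transpose hA j

lemma prodBefore_eq {α : ℝ} {A : Fin B → Mat} (τ : Equiv.Perm (Fin B)) (k : Fin B) :
    prodBefore α A τ (τ k)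
      = (((List.range k.val).map (fac α (A ∘ τ))).reverse).prod := by
  unfold prodBefore
  rw [Equiv.symm_apply_apply, List.map_reverse]
  congr 2
  have h1 : ((List.finRange B).filter (fun j => decide (j < k))).map Fin.val
      = List.range k.val := by
    have := List.filter_map (p := fun j => decide (j < k.val)) (f := Fin.val) (l := List.finRange B)
    rw [show (List.finRange B).map Fin.val = List.range B from
      List.ext_getElem (by simp) (fun i _ _ => by simp), filter_range_lt B k.val (le_of_lt k.isLt)] at this
    exact this.symm
  calc ((List.finRange B).filter (fun j => decide (j < k))).map
          (fun j => (1 : Mat) - α • A (τ j))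
      = ((List.finRange B).filter (fun j => decide (j < k))).map
          ((fac α (A ∘ τ)) ∘ Fin.val) := by
        refine List.map_congr_left fun j hj => ?_
        simp only [Function.comp, fac, j.isLt, dif_pos, Fin.eta]
    _ = (((List.finRange B).filter (fun j => decide (j < k))).map Fin.val).map
          (fac α (A ∘ τ)) := by rw [List.map_map]
    _ = (List.range k.val).map (fac α (A ∘ τ)) := by rw [h1]

lemma full_comp_rev {α : ℝ} {A : Fin B → Mat} (τ : Equiv.Perm (Fin B)) :
    ((List.range B).map (fac α (A ∘ ⇑(τ * (Fin.revPerm : Equiv.Perm (Fin B)))))).reverse.prod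
      = ((List.range B).map (fac α (A ∘ ⇑τ))).prod := by
  congr 1
  rw [← List.map_reverse, reverse_range, List.map_map]
  refine List.map_congr_left fun j hj => ?_
  simp only [List.mem_range] at hj
  have h1 : B - 1 - j < B := by omega
  simp only [Function.comp, fac, h1, hj, dif_pos, Equiv.Perm.mul_apply, Fin.revPerm_apply]
  have h2 : (⟨B - 1 - j, h1⟩ : Fin B).rev = ⟨j, hj⟩ := by
    apply Fin.ext
    simp only [Fin.val_rev]
    omega
  rw [h2]

lemma claim_inc {α : ℝ} {A : Fin B → Mat} (hA : ∀ b, (A b)ᵀ = A b)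
    (τ : Equiv.Perm (Fin B)) :
    α • ∑ k : Fin B, (prodBefore α A τ (τ k))ᵀ * A (τ k)
      = 1 - ((List.range B).map (fac α (A ∘ ⇑τ))).prod := by
  have hAτ : ∀ b, ((A ∘ ⇑τ) b)ᵀ = (A ∘ ⇑τ) b := fun b => hA _
  rw [Finset.smul_sum]
  have h : ∀ k : Fin B, α • ((prodBefore α A τ (τ k))ᵀ * A (τ k))
      = (fun n => ((List.range n).map (fac α (A ∘ ⇑τ))).prod
          * (1 - fac α (A ∘ ⇑τ) n)) k.val := by
    intro k
    rw [prodBefore_eq, symProd hAτ]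
    show _ = ((List.range (k : ℕ)).map (fac α (A ∘ ⇑τ))).prod * (1 - fac α (A ∘ ⇑τ) (k : ℕ))
    have hfac : fac α (A ∘ ⇑τ) k.val = 1 - α • A (τ k) := by
      simp [fac, k.isLt]
    rw [hfac, sub_sub_cancel, mul_smul_comm]
  rw [Finset.sum_congr rfl (fun k _ => h k),
    Fin.sum_univ_eq_sum_range
      (fun n => ((List.range n).map (fac α (A ∘ ⇑τ))).prod * (1 - fac α (A ∘ ⇑τ) n)) B,
    telescope_inc]

lemma claim_dec {α : ℝ} {A : Fin B → Mat} (τ : Equiv.Perm (Fin B)) :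
    α • ∑ k : Fin B, A (τ k) * prodBefore α A τ (τ k)
      = 1 - ((List.range B).map (fac α (A ∘ ⇑τ))).reverse.prod := by
  rw [Finset.smul_sum]
  have h : ∀ k : Fin B, α • (A (τ k) * prodBefore α A τ (τ k))
      = (fun n => (1 - fac α (A ∘ ⇑τ) n)
          * ((List.range n).map (fac α (A ∘ ⇑τ))).reverse.prod) k.val := by
    intro k
    rw [prodBefore_eq]
    show _ = (1 - fac α (A ∘ ⇑τ) (k : ℕ)) * ((List.range (k : ℕ)).map (fac α (A ∘ ⇑τ))).reverse.prod
    have hfac : fac α (A ∘ ⇑τ) k.val = 1 - α • A (τ k) := by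
      simp [fac, k.isLt]
    rw [hfac, sub_sub_cancel, smul_mul_assoc]
  rw [Finset.sum_congr rfl (fun k _ => h k),
    Fin.sum_univ_eq_sum_range
      (fun n => (1 - fac α (A ∘ ⇑τ) n)
        * ((List.range n).map (fac α (A ∘ ⇑τ))).reverse.prod) B,
    telescope_dec]

lemma S_symm (α : ℝ) (A : Fin B → Mat) (hA : ∀ b, (A b)ᵀ = A b) :
    (∑ τ : Equiv.Perm (Fin B), ∑ b : Fin B, (prodBefore α A τ b)ᵀ * A b)ᵀ
      = ∑ τ : Equiv.Perm (Fin B), ∑ b : Fin B, (prodBefore α A τ b)ᵀ * A b := by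
  have hT : (∑ τ : Equiv.Perm (Fin B), ∑ b : Fin B, (prodBefore α A τ b)ᵀ * A b)ᵀ
      = ∑ τ : Equiv.Perm (Fin B), ∑ b : Fin B, A b * prodBefore α A τ b := by
    simp [Matrix.transpose_sum, Matrix.transpose_mul, Matrix.transpose_transpose, hA]
  rw [hT]
  have hL : ∀ τ : Equiv.Perm (Fin B), ∑ b : Fin B, A b * prodBefore α A τ b
      = ∑ k : Fin B, A (τ k) * prodBefore α A τ (τ k) :=
    fun τ => (Equiv.sum_comp τ (fun b => A b * prodBefore α A τ b)).symm
  have hR : ∀ τ : Equiv.Perm (Fin B), ∑ b : Fin B, (prodBefore α A τ b)ᵀ * A b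
      = ∑ k : Fin B, (prodBefore α A τ (τ k))ᵀ * A (τ k) :=
    fun τ => (Equiv.sum_comp τ (fun b => (prodBefore α A τ b)ᵀ * A b)).symm
  simp only [hL, hR]
  rcases eq_or_ne α 0 with rfl | hα
  · have hP : ∀ (τ : Equiv.Perm (Fin B)) (b : Fin B),
        prodBefore (0 : ℝ) A τ b = 1 := by
      intro τ b
      unfold prodBefore
      refine List.prod_eq_one fun x hx => ?_
      simp only [List.mem_map] at hx
      obtain ⟨j, -, rfl⟩ := hx
      simp
    simp [hP]
  · apply smul_right_injective (Matrix (Fin p) (Fin p) ℝ) hα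
    change α • _ = α • _
    rw [Finset.smul_sum, Finset.smul_sum]
    have h1 : ∀ τ : Equiv.Perm (Fin B),
        α • ∑ k : Fin B, A (τ k) * prodBefore α A τ (τ k)
          = 1 - ((List.range B).map (fac α (A ∘ ⇑τ))).reverse.prod := claim_dec
    have h2 : ∀ τ : Equiv.Perm (Fin B),
        α • ∑ k : Fin B, (prodBefore α A τ (τ k))ᵀ * A (τ k)
          = 1 - ((List.range B).map (fac α (A ∘ ⇑τ))).prod := claim_inc hA
    rw [Finset.sum_congr rfl (fun τ _ => h1 τ), Finset.sum_congr rfl (fun τ _ => h2 τ),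
      Finset.sum_sub_distrib, Finset.sum_sub_distrib]
    congr 1
    refine ((Equiv.sum_comp (Equiv.mulRight (Fin.revPerm : Equiv.Perm (Fin B)))
      (fun σ : Equiv.Perm (Fin B) =>
        ((List.range B).map (fac α (A ∘ ⇑σ))).reverse.prod)).symm).trans ?_
    refine Finset.sum_congr rfl fun τ _ => ?_
    simp only [Equiv.coe_mulRight]
    exact full_comp_rev τ

lemma batch_Xtilde {m : ℕ} (α : ℝ) (X : Matrix (Fin B × Fin m) (Fin p) ℝ) (b : Fin B) :
    batch (Xtilde α X) b = batch X b * Pib α (Wb X) b := rfl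

lemma transpose_mul_block {m : ℕ} (Y X : Matrix (Fin B × Fin m) (Fin p) ℝ) :
    Yᵀ * X = ∑ b : Fin B, (batch Y b)ᵀ * batch X b := by
  ext i j
  simp [Matrix.mul_apply, Matrix.sum_apply, batch, Fintype.sum_prod_type]

lemma blockmulvec {m : ℕ} (Y : Matrix (Fin B × Fin m) (Fin p) ℝ) (v : Fin B × Fin m → ℝ) :
    Yᵀ *ᵥ v = ∑ b : Fin B, (batch Y b)ᵀ *ᵥ (fun i => v (b, i)) := by
  ext j
  simp [Matrix.mulVec, dotProduct, Fintype.sum_prod_type, batch,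
    Finset.sum_apply]

lemma Wb_symm {m : ℕ} (X : Matrix (Fin B × Fin m) (Fin p) ℝ) (b : Fin B) :
    (Wb X b)ᵀ = Wb X b := by
  unfold Wb
  rw [Matrix.transpose_smul, Matrix.transpose_mul, Matrix.transpose_transpose]

lemma batch_mul_self {m : ℕ} (hB : 1 ≤ B) (hm : 1 ≤ m)
    (X : Matrix (Fin B × Fin m) (Fin p) ℝ) (b : Fin B) :
    (batch X b)ᵀ * batch X b = (m : ℝ) • Wb X b := by
  unfold Wb
  rw [smul_smul]
  have hB0 : (B : ℝ) ≠ 0 := Nat.cast_ne_zero.mpr (by omega)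
  have hm0 : (m : ℝ) ≠ 0 := Nat.cast_ne_zero.mpr (by omega)
  have h1 : (m : ℝ) * ((B : ℝ) / ((B * m : ℕ) : ℝ)) = 1 := by
    push_cast
    field_simp
  rw [h1, one_smul]

lemma Zmat_eq {m : ℕ} (hB : 1 ≤ B) (hm : 1 ≤ m) (α : ℝ)
    (X : Matrix (Fin B × Fin m) (Fin p) ℝ) :
    Zmat α X = ((((B * m : ℕ) : ℝ))⁻¹ * ((B.factorial : ℝ)⁻¹ * (m : ℝ))) •
      ∑ τ : Equiv.Perm (Fin B), ∑ b : Fin B,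
        (prodBefore α (Wb X) τ b)ᵀ * Wb X b := by
  unfold Zmat
  rw [transpose_mul_block]
  have hterm : ∀ b : Fin B, (batch (Xtilde α X) b)ᵀ * batch X b
      = ((B.factorial : ℝ)⁻¹ * (m : ℝ)) •
          ∑ τ : Equiv.Perm (Fin B), (prodBefore α (Wb X) τ b)ᵀ * Wb X b := by
    intro b
    rw [batch_Xtilde, Matrix.transpose_mul, Matrix.mul_assoc,
      batch_mul_self hB hm X b]
    unfold Pib
    rw [Matrix.transpose_smul, Matrix.transpose_sum, Matrix.smul_mul,
      Matrix.mul_smul, smul_smul, Finset.sum_mul]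
  rw [Finset.sum_congr rfl (fun b _ => hterm b), ← Finset.smul_sum, Finset.sum_comm,
    smul_smul]

end Helpers

/-- The sample cross-covariance matrix `Z = (1/n) X̃ᵀ X` of the modified
features with the original features is symmetric (hence all its eigenvalues are real), and
`Range(Z) ⊆ Range(X̃ᵀ) ⊆ Range(Xᵀ)`. -/
theorem Zmat_symmetric_and_range {p B m : ℕ} (hB : 1 ≤ B) (hm : 1 ≤ m) (hp : 1 ≤ p)
    (α : ℝ) (hα : 0 ≤ α) (X : Matrix (Fin B × Fin m) (Fin p) ℝ) :
    (Zmat α X)ᵀ = Zmat α X ∧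
      LinearMap.range (Zmat α X).mulVecLin ≤ LinearMap.range ((Xtilde α X)ᵀ).mulVecLin ∧
      LinearMap.range ((Xtilde α X)ᵀ).mulVecLin ≤ LinearMap.range (Xᵀ).mulVecLin := by
  have hWsym : ∀ b : Fin B, (Wb X b)ᵀ = Wb X b := Wb_symm X
  refine ⟨?_, ?_, ?_⟩
  · rw [Zmat_eq hB hm α X, Matrix.transpose_smul, S_symm α (Wb X) hWsym]
  · rintro y ⟨v, rfl⟩
    refine ⟨(((B * m : ℕ) : ℝ))⁻¹ • (X *ᵥ v), ?_⟩
    rw [Matrix.mulVecLin_apply, Matrix.mulVecLin_apply, Matrix.mulVec_smul,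
      Matrix.mulVec_mulVec]
    show _ = Zmat α X *ᵥ v
    unfold Zmat
    rw [Matrix.smul_mulVec]
  · set R := LinearMap.range (Xᵀ).mulVecLin with hR
    have hr1 : ∀ (b : Fin B) (u : Fin m → ℝ), (batch X b)ᵀ *ᵥ u ∈ R := by
      intro b u
      refine ⟨(fun ci => if ci.1 = b then u ci.2 else 0), ?_⟩
      ext j
      rw [Matrix.mulVecLin_apply]
      simp only [Matrix.mulVec, dotProduct, Matrix.transpose_apply,
        Fintype.sum_prod_type, batch, Matrix.of_apply, mul_ite, mul_zero]
      rw [Finset.sum_eq_single b]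
      · simp
      · intro c _ hc
        simp [hc]
      · simp
    have hclosed : ∀ (b : Fin B) (x : Fin p → ℝ), x ∈ R →
        ((1 : Matrix (Fin p) (Fin p) ℝ) - α • Wb X b) *ᵥ x ∈ R := by
      intro b x hx
      rw [Matrix.sub_mulVec, Matrix.one_mulVec, Matrix.smul_mulVec]
      refine Submodule.sub_mem R hx (Submodule.smul_mem R α ?_)
      unfold Wb
      rw [Matrix.smul_mulVec]
      refine Submodule.smul_mem R _ ?_
      rw [← Matrix.mulVec_mulVec]
      exact hr1 b _
    have hlist : ∀ (l : List (Matrix (Fin p) (Fin p) ℝ)),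
        (∀ M' ∈ l, ∀ x ∈ R, M' *ᵥ x ∈ R) → ∀ x ∈ R, l.prod *ᵥ x ∈ R := by
      intro l
      induction l with
      | nil => intro _ x hx; simpa [Matrix.one_mulVec] using hx
      | cons Mh t ih =>
        intro h x hx
        rw [List.prod_cons, ← Matrix.mulVec_mulVec]
        exact h Mh (List.mem_cons_self) _
          (ih (fun M' hM' => h M' (List.mem_cons_of_mem _ hM')) x hx)
    have hPre : ∀ (τ : Equiv.Perm (Fin B)) (b : Fin B), ∀ x ∈ R,
        (prodBefore α (Wb X) τ b)ᵀ *ᵥ x ∈ R := by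
      intro τ b x hx
      unfold prodBefore
      rw [Matrix.transpose_list_prod]
      refine hlist _ ?_ x hx
      intro M' hM' z hz
      simp only [List.mem_reverse, List.mem_map] at hM'
      obtain ⟨N, hN, rfl⟩ := hM'
      obtain ⟨j, -, rfl⟩ := hN
      rw [Matrix.transpose_sub, Matrix.transpose_one, Matrix.transpose_smul, hWsym]
      exact hclosed _ z hz
    have hPib : ∀ (b : Fin B), ∀ x ∈ R, (Pib α (Wb X) b)ᵀ *ᵥ x ∈ R := by
      intro b x hx
      unfold Pib
      rw [Matrix.transpose_smul, Matrix.transpose_sum, Matrix.smul_mulVec,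
        sum_matrix_mulVec]
      exact Submodule.smul_mem R _ (Submodule.sum_mem R (fun τ _ => hPre τ b x hx))
    rintro y ⟨v, rfl⟩
    rw [Matrix.mulVecLin_apply, blockmulvec]
    refine Submodule.sum_mem R fun b _ => ?_
    rw [batch_Xtilde, Matrix.transpose_mul, ← Matrix.mulVec_mulVec]
    exact hPib b _ (hr1 b _)
end
end

section
/- Assume Range(X̃ᵀ) ⊆ Range(X̃ᵀX). Then for all k ≥ 0 the mean iterate of mini-batch gradient descent with random reshuffling satisfies β̄_k − β* = (I − BαZ)^k(β_0 − β*) + (1/n)[I − (I − BαZ)^k]Z†X̃ᵀη, and the first term decomposes as (I − BαZ)^k(β_0 − β*) = P_{Z,0}(β_0 − β*) + (I − BαZ)^k P_Z(β_0 − β*). -/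
open Matrix Finset

noncomputable section

open MiniBatchGD

namespace MiniBatchGDAux

open MiniBatchGD

variable {p B m : ℕ}

/-- Sum over `Fin l.length` of a function of the entries equals the list sum. -/
lemma sum_fin_getElem {ι : Type*} {M : Type*} [AddCommMonoid M] (H : ι → M) :
    ∀ l : List ι, (∑ k : Fin l.length, H l[k]) = (l.map H).sum
  | [] => by simp
  | j :: t => by
      simp only [Fin.getElem_fin, List.length_cons, Fin.sum_univ_succ, Fin.val_zero, List.getElem_cons_zero, Fin.val_succ,
        List.getElem_cons_succ, List.map_cons, List.sum_cons]
      exact congrArg (H j + ·) (sum_fin_getElem H t)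

lemma filter_lt_eq_drop : ∀ {B : ℕ} (j : Fin B),
    (List.finRange B).filter (fun j' => j < j') = (List.finRange B).drop (j.val + 1) := by
  intro B
  induction B with
  | zero => exact fun j => j.elim0
  | succ n ih =>
    intro j
    induction j using Fin.cases with
    | zero =>
      rw [List.finRange_succ, List.filter_cons_of_neg (by simp), List.filter_map]
      have hpred : ((fun j' => decide ((0 : Fin (n + 1)) < j')) ∘ Fin.succ)
          = fun _ => true := by
        funext j'
        simp [Function.comp, Fin.succ_pos]
      rw [hpred]
      simp
    | succ i =>
      rw [List.finRange_succ]
      have hval : (Fin.succ i).val + 1 = (i.val + 1) + 1 := rfl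
      rw [hval, List.drop_succ_cons, List.filter_cons_of_neg (by simp), List.filter_map]
      have hpred : ((fun j' => decide (Fin.succ i < j')) ∘ Fin.succ)
          = fun j' => decide (i < j') := by
        funext j'
        simp [Function.comp, Fin.succ_lt_succ_iff]
      rw [hpred, ih i, List.map_drop]

/-- Generic affine fold: one pass of per-index affine maps. -/
lemma foldl_affine {ι : Type*} (A : ι → Matrix (Fin p) (Fin p) ℝ) (v : ι → Fin p → ℝ) :
    ∀ (l : List ι) (β : Fin p → ℝ),
      l.foldl (fun b j => A j *ᵥ b + v j) β =
        (l.reverse.map A).prod *ᵥ β +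
          ∑ k : Fin l.length, ((l.drop (k.val + 1)).reverse.map A).prod *ᵥ v l[k]
  | [], β => by simp
  | j :: t, β => by
      rw [List.foldl_cons, foldl_affine A v t]
      simp only [Fin.getElem_fin, List.length_cons, Fin.sum_univ_succ, Fin.val_zero, List.getElem_cons_zero, Fin.val_succ,
        List.getElem_cons_succ, List.drop_succ_cons, List.drop_zero, List.reverse_cons,
        List.map_append, List.map_cons, List.map_nil, List.prod_append, List.prod_cons,
        List.prod_nil, mul_one]
      rw [Matrix.mulVec_add, Matrix.mulVec_mulVec, add_assoc]

/-- Telescoping expansion of a product of `1 - α • W j` factors. -/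
lemma prod_one_sub_eq {ι : Type*} (α : ℝ) (W : ι → Matrix (Fin p) (Fin p) ℝ) :
    ∀ l : List ι,
      (l.reverse.map (fun j => (1 : Matrix (Fin p) (Fin p) ℝ) - α • W j)).prod =
        1 - ∑ k : Fin l.length,
          ((l.drop (k.val + 1)).reverse.map
              (fun j => (1 : Matrix (Fin p) (Fin p) ℝ) - α • W j)).prod * (α • W l[k])
  | [] => by simp
  | j :: t => by
      simp only [Fin.getElem_fin, List.length_cons, Fin.sum_univ_succ, Fin.val_zero, List.getElem_cons_zero, Fin.val_succ, List.getElem_cons_succ,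
        List.drop_succ_cons, List.drop_zero, List.reverse_cons, List.map_append, List.map_cons,
        List.map_nil, List.prod_append, List.prod_cons, List.prod_nil, mul_one]
      rw [mul_sub, mul_one, prod_one_sub_eq α W t]
      simp only [Fin.getElem_fin]
      abel

/-- Rewrite a sum over positions of `finRange` as a sum over `Fin B`. -/
lemma sum_finRange {M : Type*} [AddCommMonoid M] (H : Fin B → M) :
    (∑ k : Fin (List.finRange B).length, H (List.finRange B)[k]) = ∑ j : Fin B, H j := by
  rw [sum_fin_getElem H (List.finRange B), Fin.sum_univ_def]


lemma sum_mulVec {ι : Type*} (s : Finset ι) (A : ι → Matrix (Fin p) (Fin p) ℝ)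
    (v : Fin p → ℝ) : (∑ i ∈ s, A i) *ᵥ v = ∑ i ∈ s, A i *ᵥ v := by
  ext j
  simp only [Matrix.mulVec, dotProduct, Matrix.sum_apply, Finset.sum_apply,
    Finset.sum_mul]
  rw [Finset.sum_comm]

/-- `step` in affine form. -/
lemma step_eq (α : ℝ) (X : Matrix (Fin B × Fin m) (Fin p) ℝ) (y : Fin B × Fin m → ℝ)
    (b : Fin B) (β : Fin p → ℝ) :
    step α X y b β = ((1 : Matrix (Fin p) (Fin p) ℝ) - α • Wb X b) *ᵥ β +
      ((B : ℝ) * α / ((B * m : ℕ) : ℝ)) • ((batch X b)ᵀ *ᵥ fun i => y (b, i)) := by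
  unfold step Wb
  rw [Matrix.mulVec_sub, smul_sub, Matrix.sub_mulVec, Matrix.one_mulVec,
    Matrix.mulVec_mulVec, Matrix.smul_mulVec, Matrix.smul_mulVec, smul_smul]
  have hc : α * ((B : ℝ) / ((B * m : ℕ) : ℝ)) = (B : ℝ) * α / ((B * m : ℕ) : ℝ) := by ring
  rw [hc]
  abel

/-- The epoch map in affine form. -/
lemma epoch_eq (α : ℝ) (X : Matrix (Fin B × Fin m) (Fin p) ℝ) (y : Fin B × Fin m → ℝ)
    (τ : Equiv.Perm (Fin B)) (β : Fin p → ℝ) :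
    epoch α X y τ β = prodAll α (Wb X) τ *ᵥ β +
      ∑ b : Fin B, prodAfter α (Wb X) τ b *ᵥ
        (((B : ℝ) * α / ((B * m : ℕ) : ℝ)) • ((batch X b)ᵀ *ᵥ fun i => y (b, i))) := by
  unfold epoch
  rw [show (fun (b : Fin p → ℝ) j => step α X y (τ j) b) = fun b j =>
      ((1 : Matrix (Fin p) (Fin p) ℝ) - α • Wb X (τ j)) *ᵥ b +
        (((B : ℝ) * α / ((B * m : ℕ) : ℝ)) • ((batch X (τ j))ᵀ *ᵥ fun i => y (τ j, i)))
    from funext fun b => funext fun j => step_eq α X y (τ j) b]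
  rw [foldl_affine]
  congr 1
  have h1 : (∑ k : Fin (List.finRange B).length,
      (((List.finRange B).drop ((k : ℕ) + 1)).reverse.map
          (fun j => (1 : Matrix (Fin p) (Fin p) ℝ) - α • Wb X (τ j))).prod *ᵥ
        (((B : ℝ) * α / ((B * m : ℕ) : ℝ)) •
          ((batch X (τ (List.finRange B)[k]))ᵀ *ᵥ
            fun i => y (τ (List.finRange B)[k], i))))
      = ∑ j : Fin B,
        (((List.finRange B).drop (j.val + 1)).reverse.map
            (fun j' => (1 : Matrix (Fin p) (Fin p) ℝ) - α • Wb X (τ j'))).prod *ᵥ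
          (((B : ℝ) * α / ((B * m : ℕ) : ℝ)) •
            ((batch X (τ j))ᵀ *ᵥ fun i => y (τ j, i))) := by
    rw [← sum_finRange (fun j : Fin B =>
      (((List.finRange B).drop (j.val + 1)).reverse.map
          (fun j' => (1 : Matrix (Fin p) (Fin p) ℝ) - α • Wb X (τ j'))).prod *ᵥ
        (((B : ℝ) * α / ((B * m : ℕ) : ℝ)) •
          ((batch X (τ j))ᵀ *ᵥ fun i => y (τ j, i))))]
    refine Finset.sum_congr rfl fun k _ => ?_
    simp [List.getElem_finRange]
  rw [h1]
  rw [← Equiv.sum_comp τ (fun b => prodAfter α (Wb X) τ b *ᵥ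
    (((B : ℝ) * α / ((B * m : ℕ) : ℝ)) • ((batch X b)ᵀ *ᵥ fun i => y (b, i))))]
  refine Finset.sum_congr rfl fun j _ => ?_
  unfold prodAfter
  rw [Equiv.symm_apply_apply, filter_lt_eq_drop]

lemma Wb_symm (α : ℝ) (X : Matrix (Fin B × Fin m) (Fin p) ℝ) (b : Fin B) :
    (Wb X b)ᵀ = Wb X b := by
  unfold Wb
  rw [Matrix.transpose_smul, Matrix.transpose_mul, Matrix.transpose_transpose]

lemma prodAfter_rev (α : ℝ) (W : Fin B → Matrix (Fin p) (Fin p) ℝ)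
    (hW : ∀ b, (W b)ᵀ = W b) (τ : Equiv.Perm (Fin B)) (b : Fin B) :
    prodAfter α W (τ * (Fin.revPerm : Equiv.Perm (Fin B))) b
      = (prodBefore α W τ b)ᵀ := by
  unfold prodAfter prodBefore
  have hsymm : (τ * (Fin.revPerm : Equiv.Perm (Fin B))).symm b = Fin.rev (τ.symm b) := by
    rw [Equiv.Perm.mul_def, Equiv.symm_trans_apply, Fin.revPerm_symm, Fin.revPerm_apply]
  rw [hsymm]
  have hlist : ((List.finRange B).filter (fun j => decide (Fin.rev (τ.symm b) < j))).reverse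
      = ((List.finRange B).filter (fun j => decide (j < τ.symm b))).map Fin.rev := by
    rw [← List.filter_reverse, List.finRange_reverse, List.filter_map]
    have hpred : ((fun j => decide (Fin.rev (τ.symm b) < j)) ∘ Fin.rev)
        = fun j => decide (j < τ.symm b) := by
      funext j
      simp [Function.comp, Fin.rev_lt_rev]
    rw [hpred]
  rw [hlist]
  rw [Matrix.transpose_list_prod]
  simp only [← List.map_reverse, List.reverse_reverse, List.map_map]
  refine congrArg List.prod (List.map_congr_left fun j _ => ?_)
  simp only [Function.comp_apply, Equiv.Perm.mul_apply, Fin.revPerm_apply, Fin.rev_rev,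
    Matrix.transpose_sub, Matrix.transpose_one, Matrix.transpose_smul, hW]

lemma sum_prodAfter_eq (α : ℝ) (W : Fin B → Matrix (Fin p) (Fin p) ℝ)
    (hW : ∀ b, (W b)ᵀ = W b) (b : Fin B) :
    ∑ τ : Equiv.Perm (Fin B), prodAfter α W τ b
      = (B.factorial : ℝ) • (Pib α W b)ᵀ := by
  have h1 : ∑ τ : Equiv.Perm (Fin B), prodAfter α W τ b
      = ∑ τ : Equiv.Perm (Fin B), (prodBefore α W τ b)ᵀ := by
    rw [← Equiv.sum_comp (Equiv.mulRight (Fin.revPerm : Equiv.Perm (Fin B)))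
      (fun τ => prodAfter α W τ b)]
    refine Finset.sum_congr rfl fun τ _ => ?_
    rw [Equiv.coe_mulRight]
    exact prodAfter_rev α W hW τ b
  rw [h1]
  unfold Pib
  rw [Matrix.transpose_smul, Matrix.transpose_sum, smul_smul,
    mul_inv_cancel₀ (Nat.cast_ne_zero.mpr (Nat.factorial_ne_zero B)), one_smul]

lemma batch_Xtilde (α : ℝ) (X : Matrix (Fin B × Fin m) (Fin p) ℝ) (b : Fin B) :
    batch (Xtilde α X) b = batch X b * Pib α (Wb X) b := rfl

lemma transpose_mul_batches (Y X' : Matrix (Fin B × Fin m) (Fin p) ℝ) :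
    Yᵀ * X' = ∑ b : Fin B, (batch Y b)ᵀ * batch X' b := by
  ext j j'
  rw [Matrix.mul_apply, Fintype.sum_prod_type, Matrix.sum_apply]
  refine Finset.sum_congr rfl fun b _ => ?_
  rw [Matrix.mul_apply]
  rfl

lemma transpose_mulVec_batches (Y : Matrix (Fin B × Fin m) (Fin p) ℝ)
    (w : Fin B × Fin m → ℝ) :
    Yᵀ *ᵥ w = ∑ b : Fin B, (batch Y b)ᵀ *ᵥ (fun i => w (b, i)) := by
  ext j
  rw [show (Yᵀ *ᵥ w) j = ∑ z : Fin B × Fin m, Yᵀ j z * w z from rfl,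
    Fintype.sum_prod_type, Finset.sum_apply]
  refine Finset.sum_congr rfl fun b _ => ?_
  rfl

lemma BalphaZ (α : ℝ) (X : Matrix (Fin B × Fin m) (Fin p) ℝ) :
    ((B : ℝ) * α) • Zmat α X = α • ∑ b : Fin B, (Pib α (Wb X) b)ᵀ * Wb X b := by
  unfold Zmat Wb
  rw [smul_smul, transpose_mul_batches (Xtilde α X) X, Finset.smul_sum, Finset.smul_sum]
  refine Finset.sum_congr rfl fun b _ => ?_
  rw [batch_Xtilde, Matrix.transpose_mul, mul_smul_comm, Matrix.mul_assoc, smul_smul]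
  congr 1
  push_cast
  ring

lemma prodAll_expand (α : ℝ) (X : Matrix (Fin B × Fin m) (Fin p) ℝ)
    (τ : Equiv.Perm (Fin B)) :
    prodAll α (Wb X) τ = 1 - ∑ b : Fin B, prodAfter α (Wb X) τ b * (α • Wb X b) := by
  unfold prodAll
  rw [prod_one_sub_eq α (fun j => Wb X (τ j)) (List.finRange B)]
  congr 1
  have h1 : (∑ k : Fin (List.finRange B).length,
      (((List.finRange B).drop ((k : ℕ) + 1)).reverse.map
          (fun j => (1 : Matrix (Fin p) (Fin p) ℝ) - α • Wb X (τ j))).prod *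
        (α • Wb X (τ (List.finRange B)[k])))
      = ∑ j : Fin B,
        (((List.finRange B).drop (j.val + 1)).reverse.map
            (fun j' => (1 : Matrix (Fin p) (Fin p) ℝ) - α • Wb X (τ j'))).prod *
          (α • Wb X (τ j)) := by
    rw [← sum_finRange (fun j : Fin B =>
      (((List.finRange B).drop (j.val + 1)).reverse.map
          (fun j' => (1 : Matrix (Fin p) (Fin p) ℝ) - α • Wb X (τ j'))).prod *
        (α • Wb X (τ j)))]
    refine Finset.sum_congr rfl fun k _ => ?_
    simp [List.getElem_finRange]
  rw [h1]
  rw [← Equiv.sum_comp τ (fun b => prodAfter α (Wb X) τ b * (α • Wb X b))]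
  refine Finset.sum_congr rfl fun j _ => ?_
  unfold prodAfter
  rw [Equiv.symm_apply_apply, filter_lt_eq_drop]

lemma sum_prodAll (α : ℝ) (X : Matrix (Fin B × Fin m) (Fin p) ℝ) :
    ∑ τ : Equiv.Perm (Fin B), prodAll α (Wb X) τ
      = (B.factorial : ℝ) • ((1 : Matrix (Fin p) (Fin p) ℝ)
          - ((B : ℝ) * α) • Zmat α X) := by
  have hexp : ∑ τ : Equiv.Perm (Fin B), prodAll α (Wb X) τ
      = ∑ τ : Equiv.Perm (Fin B),
          ((1 : Matrix (Fin p) (Fin p) ℝ)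
            - ∑ b : Fin B, prodAfter α (Wb X) τ b * (α • Wb X b)) :=
    Finset.sum_congr rfl fun τ _ => prodAll_expand α X τ
  rw [hexp, Finset.sum_sub_distrib, Finset.sum_const, Finset.card_univ, Fintype.card_perm,
    Fintype.card_fin]
  rw [Finset.sum_comm]
  have h2 : ∀ b : Fin B,
      (∑ τ : Equiv.Perm (Fin B), prodAfter α (Wb X) τ b * (α • Wb X b))
        = (B.factorial : ℝ) • (α • ((Pib α (Wb X) b)ᵀ * Wb X b)) := by
    intro b
    rw [← Finset.sum_mul, sum_prodAfter_eq α (Wb X) (Wb_symm α X) b, smul_mul_assoc,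
      mul_smul_comm]
  rw [Finset.sum_congr rfl fun b _ => h2 b, ← Finset.smul_sum, ← Finset.smul_sum,
    ← BalphaZ α X, smul_sub, Nat.cast_smul_eq_nsmul, Nat.cast_smul_eq_nsmul]

lemma meanIter_succ (α : ℝ) (X : Matrix (Fin B × Fin m) (Fin p) ℝ)
    (y : Fin B × Fin m → ℝ) (β₀ : Fin p → ℝ) (k : ℕ) :
    meanIter α X y β₀ (k + 1)
      = ((1 : Matrix (Fin p) (Fin p) ℝ) - ((B : ℝ) * α) • Zmat α X) *ᵥ meanIter α X y β₀ k
        + ((B : ℝ) * α / ((B * m : ℕ) : ℝ)) • ((Xtilde α X)ᵀ *ᵥ y) := by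
  show ((B.factorial : ℝ))⁻¹ • ∑ τ : Equiv.Perm (Fin B), epoch α X y τ (meanIter α X y β₀ k)
      = _
  set βk := meanIter α X y β₀ k with hβk
  have hsum : ∑ τ : Equiv.Perm (Fin B), epoch α X y τ βk
      = (∑ τ : Equiv.Perm (Fin B), prodAll α (Wb X) τ) *ᵥ βk
        + ∑ b : Fin B, (∑ τ : Equiv.Perm (Fin B), prodAfter α (Wb X) τ b) *ᵥ
            (((B : ℝ) * α / ((B * m : ℕ) : ℝ)) • ((batch X b)ᵀ *ᵥ fun i => y (b, i))) := by
    rw [Finset.sum_congr rfl fun τ _ => epoch_eq α X y τ βk, Finset.sum_add_distrib,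
      sum_mulVec]
    congr 1
    rw [Finset.sum_comm]
    refine Finset.sum_congr rfl fun b _ => ?_
    rw [sum_mulVec]
  rw [hsum, sum_prodAll α X]
  rw [Finset.sum_congr rfl fun b _ =>
    congrArg (· *ᵥ (((B : ℝ) * α / ((B * m : ℕ) : ℝ)) •
      ((batch X b)ᵀ *ᵥ fun i => y (b, i))))
      (sum_prodAfter_eq α (Wb X) (Wb_symm α X) b)]
  have hfac : ((B.factorial : ℝ))⁻¹ * (B.factorial : ℝ) = 1 :=
    inv_mul_cancel₀ (Nat.cast_ne_zero.mpr (Nat.factorial_ne_zero B))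
  rw [Matrix.smul_mulVec]
  rw [Finset.sum_congr rfl fun b _ => Matrix.smul_mulVec (B.factorial : ℝ)
    ((Pib α (Wb X) b)ᵀ)
    (((B : ℝ) * α / ((B * m : ℕ) : ℝ)) • ((batch X b)ᵀ *ᵥ fun i => y (b, i)))]
  rw [← Finset.smul_sum, smul_add, smul_smul, smul_smul, hfac, one_smul, one_smul]
  congr 1
  rw [transpose_mulVec_batches (Xtilde α X) y, Finset.smul_sum]
  refine Finset.sum_congr rfl fun b _ => ?_
  rw [batch_Xtilde, Matrix.transpose_mul, ← Matrix.mulVec_mulVec, Matrix.mulVec_smul]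

end MiniBatchGDAux

open MiniBatchGDAux

/-- Theorem `batch_dynamics`. Assume `Range(X̃ᵀ) ⊆ Range(X̃ᵀX)`. Then for all
`k ≥ 0` the mean iterate of mini-batch gradient descent with random reshuffling satisfies
`β̄_k − β* = (I − BαZ)^k (β₀ − β*) + (1/n)[I − (I − BαZ)^k] Z† X̃ᵀ η`, and the first term
decomposes as `(I − BαZ)^k (β₀ − β*) = P_{Z,0}(β₀ − β*) + (I − BαZ)^k P_Z (β₀ − β*)`. -/
theorem batch_dynamics {p B m : ℕ} (hB : 1 ≤ B) (hm : 1 ≤ m) (hp : 1 ≤ p)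
    (α : ℝ) (hα : 0 ≤ α) (X : Matrix (Fin B × Fin m) (Fin p) ℝ)
    (βstar β₀ : Fin p → ℝ) (η : Fin B × Fin m → ℝ)
    (y : Fin B × Fin m → ℝ) (hy : y = X *ᵥ βstar + η)
    (Zd : Matrix (Fin p) (Fin p) ℝ) (hZd : IsMoorePenrose (Zmat α X) Zd)
    (hrange : LinearMap.range ((Xtilde α X)ᵀ).mulVecLin ≤
      LinearMap.range ((Xtilde α X)ᵀ * X).mulVecLin) :
    ∀ k : ℕ,
      meanIter α X y β₀ k - βstar =
        ((1 - ((B : ℝ) * α) • Zmat α X) ^ k) *ᵥ (β₀ - βstar) +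
          (((B * m : ℕ) : ℝ))⁻¹ •
            (((1 - (1 - ((B : ℝ) * α) • Zmat α X) ^ k) * Zd) *ᵥ ((Xtilde α X)ᵀ *ᵥ η)) ∧
      ((1 - ((B : ℝ) * α) • Zmat α X) ^ k) *ᵥ (β₀ - βstar) =
        (1 - Zd * Zmat α X) *ᵥ (β₀ - βstar) +
          ((1 - ((B : ℝ) * α) • Zmat α X) ^ k) *ᵥ ((Zd * Zmat α X) *ᵥ (β₀ - βstar)) := by
  have hn : ((B * m : ℕ) : ℝ) ≠ 0 :=
    Nat.cast_ne_zero.mpr (Nat.mul_pos hB hm).ne'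
  have hZn : ((B * m : ℕ) : ℝ) • Zmat α X = (Xtilde α X)ᵀ * X := by
    unfold Zmat
    rw [smul_smul, mul_inv_cancel₀ hn, one_smul]
  have hw : (Zmat α X * Zd) *ᵥ ((Xtilde α X)ᵀ *ᵥ η) = (Xtilde α X)ᵀ *ᵥ η := by
    obtain ⟨v, hv⟩ := hrange ⟨η, rfl⟩
    simp only [Matrix.mulVecLin_apply] at hv
    have hZv : Zmat α X *ᵥ (((B * m : ℕ) : ℝ) • v) = (Xtilde α X)ᵀ *ᵥ η := by
      rw [Matrix.mulVec_smul, ← Matrix.smul_mulVec, hZn, hv]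
    calc (Zmat α X * Zd) *ᵥ ((Xtilde α X)ᵀ *ᵥ η)
        = (Zmat α X * Zd) *ᵥ (Zmat α X *ᵥ (((B * m : ℕ) : ℝ) • v)) := by rw [hZv]
      _ = (Zmat α X * Zd * Zmat α X) *ᵥ (((B * m : ℕ) : ℝ) • v) := by
          rw [Matrix.mulVec_mulVec]
      _ = Zmat α X *ᵥ (((B * m : ℕ) : ℝ) • v) := by rw [hZd.1]
      _ = _ := hZv
  have hMnull : ∀ k : ℕ,
      (1 - ((B : ℝ) * α) • Zmat α X) ^ k * (1 - Zd * Zmat α X) = 1 - Zd * Zmat α X := by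
    intro k
    induction k with
    | zero => rw [pow_zero, one_mul]
    | succ k ih =>
      have hZ0 : Zmat α X * (1 - Zd * Zmat α X) = 0 := by
        rw [mul_sub, mul_one, ← Matrix.mul_assoc, hZd.1, sub_self]
      have hMN : (1 - ((B : ℝ) * α) • Zmat α X) * (1 - Zd * Zmat α X)
          = 1 - Zd * Zmat α X := by
        rw [sub_mul, one_mul, smul_mul_assoc, hZ0, smul_zero, sub_zero]
      rw [pow_succ, Matrix.mul_assoc, hMN, ih]
  have hsplit : ∀ k : ℕ,
      ((1 - ((B : ℝ) * α) • Zmat α X) ^ k) *ᵥ (β₀ - βstar) =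
        (1 - Zd * Zmat α X) *ᵥ (β₀ - βstar) +
          ((1 - ((B : ℝ) * α) • Zmat α X) ^ k) *ᵥ ((Zd * Zmat α X) *ᵥ (β₀ - βstar)) := by
    intro k
    rw [Matrix.mulVec_mulVec, ← hMnull k, ← Matrix.add_mulVec, ← mul_add,
      sub_add_cancel, mul_one]
  have hrec : ∀ k : ℕ, meanIter α X y β₀ (k + 1) - βstar
      = (1 - ((B : ℝ) * α) • Zmat α X) *ᵥ (meanIter α X y β₀ k - βstar)
        + ((B : ℝ) * α / ((B * m : ℕ) : ℝ)) • ((Xtilde α X)ᵀ *ᵥ η) := by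
    intro k
    rw [meanIter_succ α X y β₀ k, hy, Matrix.mulVec_add, Matrix.mulVec_mulVec]
    have h1 : ((B : ℝ) * α / ((B * m : ℕ) : ℝ)) •
        (((Xtilde α X)ᵀ * X) *ᵥ βstar + (Xtilde α X)ᵀ *ᵥ η)
        = ((B : ℝ) * α) • (Zmat α X *ᵥ βstar)
          + ((B : ℝ) * α / ((B * m : ℕ) : ℝ)) • ((Xtilde α X)ᵀ *ᵥ η) := by
      rw [smul_add]
      congr 1
      rw [← hZn, Matrix.smul_mulVec, smul_smul]
      congr 1
      field_simp
    rw [h1, Matrix.sub_mulVec, Matrix.sub_mulVec, Matrix.one_mulVec, Matrix.one_mulVec,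
      Matrix.smul_mulVec, Matrix.smul_mulVec, Matrix.mulVec_sub, smul_sub]
    abel
  have hkey : ∀ k : ℕ,
      (1 - ((B : ℝ) * α) • Zmat α X) *
          ((1 - (1 - ((B : ℝ) * α) • Zmat α X) ^ k) * Zd)
        + ((B : ℝ) * α) • (Zmat α X * Zd)
      = (1 - (1 - ((B : ℝ) * α) • Zmat α X) ^ (k + 1)) * Zd := by
    intro k
    rw [← Matrix.mul_assoc, ← smul_mul_assoc, ← add_mul]
    congr 1
    rw [mul_sub, mul_one, ← pow_succ']
    abel
  have hmain : ∀ k : ℕ, meanIter α X y β₀ k - βstar =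
      ((1 - ((B : ℝ) * α) • Zmat α X) ^ k) *ᵥ (β₀ - βstar) +
        (((B * m : ℕ) : ℝ))⁻¹ •
          (((1 - (1 - ((B : ℝ) * α) • Zmat α X) ^ k) * Zd) *ᵥ ((Xtilde α X)ᵀ *ᵥ η)) := by
    intro k
    induction k with
    | zero =>
      show β₀ - βstar = _
      rw [pow_zero, Matrix.one_mulVec, sub_self, zero_mul, Matrix.zero_mulVec, smul_zero,
        add_zero]
    | succ k ih =>
      rw [hrec k, ih, Matrix.mulVec_add, Matrix.mulVec_mulVec, ← pow_succ',
        Matrix.mulVec_smul, Matrix.mulVec_mulVec]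
      have hc' : ((B : ℝ) * α / ((B * m : ℕ) : ℝ)) • ((Xtilde α X)ᵀ *ᵥ η)
          = (((B * m : ℕ) : ℝ))⁻¹ •
              ((((B : ℝ) * α) • (Zmat α X * Zd)) *ᵥ ((Xtilde α X)ᵀ *ᵥ η)) := by
        rw [Matrix.smul_mulVec, hw, smul_smul]
        congr 1
        ring
      rw [hc', add_assoc, ← smul_add, ← Matrix.add_mulVec, hkey k]
  exact fun k => ⟨hmain k, hsplit k⟩
end
end

section
/- Suppose Π_b = Π := I − p(W) for every b = 1,…,B, where p is a polynomial, that X ∈ ℝ^{n×p} (with p ≤ n) and Π are invertible, with singular value decomposition X = USVᵀ and (1/n)SᵀS diagonal with positive entries λ̂_1,…,λ̂_p, and additionally that VᵀΣV = Λ is diagonal with entries λ_1,…,λ_p. Then for mini-batch gradient descent with random reshuffling with B mini-batches and step size α/B, for every k ≥ 0 the generalization error is R_X(β̄_k) = ∑_{i=1}^p λ_i[1 − αλ̂_i(1 − p(λ̂_i))]^{2k}[Vᵀ(β_0 − β*)]_i² + (σ²/n)∑_{i=1}^p (λ_i/λ̂_i)(1 − [1 − αλ̂_i(1 − p(λ̂_i))]^k)².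 -/
open Matrix Finset

noncomputable section

open MiniBatchGD MeasureTheory

namespace MBGDAux

open MiniBatchGD Matrix Finset List

variable {p B m : ℕ}

open Matrix Finset List

variable {p B m : ℕ}

section ListLemmas

lemma sorted_ext {l₁ l₂ : List (Fin B)} (h₁ : l₁.Pairwise (· < ·)) (h₂ : l₂.Pairwise (· < ·))
    (h : ∀ x, x ∈ l₁ ↔ x ∈ l₂) : l₁ = l₂ := by
  have : Std.Antisymm (α := Fin B) (· < ·) := ⟨fun a b hab hba => absurd hba (asymm hab)⟩
  exact List.Perm.eq_of_pairwise' h₁ h₂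
    ((List.perm_ext_iff_of_nodup h₁.nodup h₂.nodup).mpr h)

lemma sorted_finRange (B : ℕ) : (List.finRange B).Pairwise (· < ·) :=
  List.pairwise_lt_finRange B

lemma filter_sorted {P : Fin B → Bool} {l : List (Fin B)} (h : l.Pairwise (· < ·)) :
    (l.filter P).Pairwise (· < ·) := h.sublist List.filter_sublist

lemma filter_lt_zero :
    ((List.finRange B).filter (fun j : Fin B => decide ((j : ℕ) < 0))) = [] := by
  simp

lemma filter_lt_succ (t : ℕ) (ht : t < B) :
    ((List.finRange B).filter (fun j : Fin B => decide ((j : ℕ) < t + 1)))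
      = ((List.finRange B).filter (fun j : Fin B => decide ((j : ℕ) < t))) ++ [⟨t, ht⟩] := by
  apply sorted_ext (filter_sorted (sorted_finRange B))
  · rw [List.pairwise_append]
    refine ⟨filter_sorted (sorted_finRange B), List.pairwise_singleton _ _, ?_⟩
    intro x hx y hy
    simp only [List.mem_filter, List.mem_finRange, true_and, decide_eq_true_eq] at hx
    simp only [List.mem_singleton] at hy
    subst hy
    exact hx
  · intro x
    simp only [List.mem_append, List.mem_filter, List.mem_finRange, true_and,
      decide_eq_true_eq, List.mem_singleton]
    constructor
    · intro hx
      rcases Nat.lt_succ_iff_lt_or_eq.mp hx with h | h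
      · exact Or.inl h
      · exact Or.inr (Fin.ext h)
    · rintro (h | rfl)
      · omega
      · exact Nat.lt_succ_self t

lemma filter_lt_of_ge (t : ℕ) (ht : B ≤ t) :
    ((List.finRange B).filter (fun j : Fin B => decide ((j : ℕ) < t))) = List.finRange B := by
  apply List.filter_eq_self.mpr
  intro a _
  simp only [decide_eq_true_eq]
  exact lt_of_lt_of_le a.isLt ht

lemma filter_le_of_ge (t : ℕ) (ht : B ≤ t) :
    ((List.finRange B).filter (fun j : Fin B => decide (t ≤ (j : ℕ)))) = [] := by
  apply List.filter_eq_nil_iff.mpr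
  intro a _
  simp only [decide_eq_true_eq, not_le]
  exact lt_of_lt_of_le a.isLt ht

lemma filter_le_succ (t : ℕ) (ht : t < B) :
    ((List.finRange B).filter (fun j : Fin B => decide (t ≤ (j : ℕ))))
      = ⟨t, ht⟩ :: ((List.finRange B).filter (fun j : Fin B => decide (t + 1 ≤ (j : ℕ)))) := by
  apply sorted_ext (filter_sorted (sorted_finRange B))
  · rw [List.pairwise_cons]
    refine ⟨?_, filter_sorted (sorted_finRange B)⟩
    intro y hy
    simp only [List.mem_filter, List.mem_finRange, true_and, decide_eq_true_eq] at hy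
    exact hy
  · intro x
    simp only [List.mem_cons, List.mem_filter, List.mem_finRange, true_and,
      decide_eq_true_eq]
    constructor
    · intro hx
      rcases eq_or_lt_of_le hx with h | h
      · exact Or.inl (Fin.ext h.symm)
      · exact Or.inr h
    · rintro (rfl | h)
      · exact le_refl t
      · omega

lemma filter_rev (t : Fin B) :
    ((List.finRange B).filter (fun j : Fin B => decide (t.rev < j)))
      = (((List.finRange B).filter (fun j : Fin B => decide (j < t))).reverse.map Fin.rev) := by
  apply sorted_ext (filter_sorted (sorted_finRange B))
  · -- reverse of sorted-lt is sorted-gt; mapping rev flips again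
    rw [List.pairwise_map]
    rw [List.pairwise_reverse]
    have := filter_sorted (l := List.finRange B)
      (P := fun j => decide (j < t)) (sorted_finRange B)
    refine this.imp ?_
    intro a b hab
    exact Fin.rev_lt_rev.mpr hab
  · intro x
    simp only [List.mem_map, List.mem_reverse, List.mem_filter, List.mem_finRange, true_and,
      decide_eq_true_eq]
    constructor
    · intro hx
      exact ⟨x.rev, Fin.rev_lt_rev.mp (by rw [Fin.rev_rev]; exact hx), Fin.rev_rev x⟩
    · rintro ⟨y, hy, rfl⟩
      exact Fin.rev_lt_rev.mpr hy

end ListLemmas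
section Products

variable (α₁ : ℝ) (W : Fin B → Matrix (Fin p) (Fin p) ℝ) (τ : Equiv.Perm (Fin B))

/-- `∏_{j < t} (1 - α₁ W_{τ(j)})`, decreasing order. -/
def Fp (t : ℕ) : Matrix (Fin p) (Fin p) ℝ :=
  (((List.finRange B).filter (fun j : Fin B => decide ((j : ℕ) < t))).reverse.map
      (fun j => (1 : Matrix (Fin p) (Fin p) ℝ) - α₁ • W (τ j))).prod

lemma Fp_zero : Fp α₁ W τ 0 = 1 := by simp [Fp]

lemma Fp_succ (t : ℕ) (ht : t < B) :
    Fp α₁ W τ (t + 1) = ((1 : Matrix (Fin p) (Fin p) ℝ) - α₁ • W (τ ⟨t, ht⟩)) * Fp α₁ W τ t := by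
  unfold Fp
  rw [filter_lt_succ t ht, List.reverse_append]
  simp

lemma Fp_ge (t : ℕ) (ht : B ≤ t) : Fp α₁ W τ t = prodAll α₁ W τ := by
  unfold Fp prodAll
  rw [filter_lt_of_ge t ht]

lemma prodBefore_eq_Fp (b : Fin B) :
    prodBefore α₁ W τ b = Fp α₁ W τ ((τ.symm b : Fin B) : ℕ) := by
  unfold prodBefore Fp
  congr 2

lemma prodAfter_eq (b : Fin B) :
    prodAfter α₁ W τ b
      = (((List.finRange B).filter
            (fun j : Fin B => decide (((τ.symm b : Fin B) : ℕ) + 1 ≤ (j : ℕ)))).reverse.map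
          (fun j => (1 : Matrix (Fin p) (Fin p) ℝ) - α₁ • W (τ j))).prod := by
  unfold prodAfter
  congr 2

lemma sum_Fp (t : ℕ) (htB : t ≤ B) :
    ∑ σ : Equiv.Perm (Fin B), Fp α₁ W σ t
      = (B.factorial : ℝ) • (1 : Matrix (Fin p) (Fin p) ℝ)
        - α₁ • ∑ σ : Equiv.Perm (Fin B),
            ∑ j ∈ Finset.univ.filter (fun j : Fin B => (j : ℕ) < t),
              W (σ j) * Fp α₁ W σ ((j : ℕ)) := by
  induction t with
  | zero =>
      have h1 : (Finset.univ.filter (fun j : Fin B => (j : ℕ) < 0)) = ∅ := by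
        ext j; simp
      simp [Fp_zero, h1, Finset.sum_const, Fintype.card_perm, Fintype.card_fin,
        Nat.cast_smul_eq_nsmul]
  | succ t ih =>
      have ht : t < B := htB
      have hins : (Finset.univ.filter (fun j : Fin B => (j : ℕ) < t + 1))
          = insert (⟨t, ht⟩ : Fin B) (Finset.univ.filter (fun j : Fin B => (j : ℕ) < t)) := by
        ext j
        simp only [Finset.mem_filter, Finset.mem_univ, true_and, Finset.mem_insert]
        constructor
        · intro h
          rcases Nat.lt_succ_iff_lt_or_eq.mp h with h | h
          · exact Or.inr h
          · exact Or.inl (Fin.ext h)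
        · rintro (rfl | h)
          · exact Nat.lt_succ_self t
          · omega
      have hnot : (⟨t, ht⟩ : Fin B) ∉ (Finset.univ.filter (fun j : Fin B => (j : ℕ) < t)) := by
        simp
      have hstep : ∀ σ : Equiv.Perm (Fin B),
          Fp α₁ W σ (t + 1) = Fp α₁ W σ t - α₁ • (W (σ ⟨t, ht⟩) * Fp α₁ W σ t) := by
        intro σ
        rw [Fp_succ α₁ W σ t ht, sub_mul, one_mul, smul_mul_assoc]
      calc ∑ σ : Equiv.Perm (Fin B), Fp α₁ W σ (t + 1)
          = ∑ σ : Equiv.Perm (Fin B), (Fp α₁ W σ t - α₁ • (W (σ ⟨t, ht⟩) * Fp α₁ W σ t)) := by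
            exact Finset.sum_congr rfl (fun σ _ => hstep σ)
        _ = (∑ σ : Equiv.Perm (Fin B), Fp α₁ W σ t)
              - α₁ • ∑ σ : Equiv.Perm (Fin B), W (σ ⟨t, ht⟩) * Fp α₁ W σ t := by
            rw [Finset.sum_sub_distrib, Finset.smul_sum]
        _ = (B.factorial : ℝ) • (1 : Matrix (Fin p) (Fin p) ℝ)
              - α₁ • ∑ σ : Equiv.Perm (Fin B),
                  ∑ j ∈ Finset.univ.filter (fun j : Fin B => (j : ℕ) < t + 1),
                    W (σ j) * Fp α₁ W σ ((j : ℕ)) := by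
            rw [ih (Nat.le_of_succ_le htB)]
            have : ∀ σ : Equiv.Perm (Fin B),
                ∑ j ∈ Finset.univ.filter (fun j : Fin B => (j : ℕ) < t + 1),
                    W (σ j) * Fp α₁ W σ ((j : ℕ))
                  = W (σ ⟨t, ht⟩) * Fp α₁ W σ t
                    + ∑ j ∈ Finset.univ.filter (fun j : Fin B => (j : ℕ) < t),
                        W (σ j) * Fp α₁ W σ ((j : ℕ)) := by
              intro σ
              rw [hins, Finset.sum_insert hnot]
            rw [Finset.sum_congr rfl (fun σ _ => this σ), Finset.sum_add_distrib]
            rw [smul_add]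
            abel

lemma sum_prodAll_eq :
    ∑ σ : Equiv.Perm (Fin B), prodAll α₁ W σ
      = (B.factorial : ℝ) • (1 : Matrix (Fin p) (Fin p) ℝ)
        - α₁ • ∑ b : Fin B, W b * ∑ σ : Equiv.Perm (Fin B), prodBefore α₁ W σ b := by
  have h := sum_Fp α₁ W B le_rfl
  have h1 : ∀ σ : Equiv.Perm (Fin B), Fp α₁ W σ B = prodAll α₁ W σ :=
    fun σ => Fp_ge α₁ W σ B le_rfl
  have h2 : (Finset.univ.filter (fun j : Fin B => (j : ℕ) < B)) = Finset.univ := by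
    ext j; simp [j.isLt]
  rw [Finset.sum_congr rfl (fun σ _ => h1 σ)] at h
  rw [h, h2]
  congr 2
  have h3 : ∀ σ : Equiv.Perm (Fin B),
      ∑ j : Fin B, W (σ j) * Fp α₁ W σ ((j : ℕ))
        = ∑ b : Fin B, W b * prodBefore α₁ W σ b := by
    intro σ
    rw [← Equiv.sum_comp σ.symm (fun j => W (σ j) * Fp α₁ W σ ((j : ℕ)))]
    exact Finset.sum_congr rfl fun b _ => by
      rw [Equiv.apply_symm_apply, prodBefore_eq_Fp]
  rw [Finset.sum_congr rfl (fun σ _ => h3 σ), Finset.sum_comm]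
  exact Finset.sum_congr rfl fun b _ => by rw [Finset.mul_sum]

lemma prodAfter_revPerm (hsym : ∀ c, (W c)ᵀ = W c) (b : Fin B) :
    prodAfter α₁ W (τ * (Fin.revPerm : Equiv.Perm (Fin B))) b = (prodBefore α₁ W τ b)ᵀ := by
  have hsymm : (τ * (Fin.revPerm : Equiv.Perm (Fin B))).symm b = (τ.symm b).rev := rfl
  have happ : ∀ j : Fin B, (τ * (Fin.revPerm : Equiv.Perm (Fin B))) j = τ j.rev := fun j => rfl
  unfold prodAfter prodBefore
  rw [hsymm]
  have hfilter : ((List.finRange B).filter (fun j => decide ((τ.symm b).rev < j)))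
      = (((List.finRange B).filter (fun j : Fin B => decide (j < τ.symm b))).reverse.map Fin.rev) :=
    filter_rev (τ.symm b)
  rw [hfilter]
  have h1 : ((((List.finRange B).filter (fun j : Fin B => decide (j < τ.symm b))).reverse.map
      Fin.rev)).reverse
      = ((List.finRange B).filter (fun j : Fin B => decide (j < τ.symm b))).map Fin.rev := by
    rw [List.map_reverse, List.reverse_reverse]
  rw [h1, List.map_map]
  have h2 : ((fun j => (1 : Matrix (Fin p) (Fin p) ℝ)
        - α₁ • W ((τ * (Fin.revPerm : Equiv.Perm (Fin B))) j)) ∘ Fin.rev)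
      = fun j => (1 : Matrix (Fin p) (Fin p) ℝ) - α₁ • W (τ j) := by
    funext j
    simp only [Function.comp_apply, happ, Fin.rev_rev]
  rw [h2, Matrix.transpose_list_prod, List.map_map, List.map_reverse, List.reverse_reverse]
  have h3 : (Matrix.transpose ∘ (fun j => (1 : Matrix (Fin p) (Fin p) ℝ) - α₁ • W (τ j)))
      = fun j => (1 : Matrix (Fin p) (Fin p) ℝ) - α₁ • W (τ j) := by
    funext j
    simp [Matrix.transpose_sub, Matrix.transpose_smul, Matrix.transpose_one, hsym]
  rw [h3]

lemma sum_prodAfter_eq (hsym : ∀ c, (W c)ᵀ = W c) (b : Fin B) :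
    ∑ σ : Equiv.Perm (Fin B), prodAfter α₁ W σ b
      = (∑ σ : Equiv.Perm (Fin B), prodBefore α₁ W σ b)ᵀ := by
  calc ∑ σ : Equiv.Perm (Fin B), prodAfter α₁ W σ b
      = ∑ σ : Equiv.Perm (Fin B),
          prodAfter α₁ W (σ * (Fin.revPerm : Equiv.Perm (Fin B))) b :=
        (Equiv.sum_comp (Equiv.mulRight (Fin.revPerm : Equiv.Perm (Fin B)))
          (fun σ => prodAfter α₁ W σ b)).symm
    _ = ∑ σ : Equiv.Perm (Fin B), (prodBefore α₁ W σ b)ᵀ :=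
        Finset.sum_congr rfl fun σ _ => prodAfter_revPerm α₁ W σ hsym b
    _ = (∑ σ : Equiv.Perm (Fin B), prodBefore α₁ W σ b)ᵀ := by
        rw [Matrix.transpose_sum]

end Products
section Spectral

variable {P : ℕ}

lemma transpose_aeval (A : Matrix (Fin P) (Fin P) ℝ) (q : Polynomial ℝ) :
    (Polynomial.aeval A q)ᵀ = Polynomial.aeval Aᵀ q := by
  induction q using Polynomial.induction_on' with
  | add f g hf hg => simp [map_add, Matrix.transpose_add, hf, hg]
  | monomial n c =>
      simp [Polynomial.aeval_monomial, Algebra.algebraMap_eq_smul_one, smul_mul_assoc,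
        one_mul, Matrix.transpose_smul, Matrix.transpose_pow]

lemma aeval_diagonal (d : Fin P → ℝ) (q : Polynomial ℝ) :
    Polynomial.aeval (Matrix.diagonal d) q
      = Matrix.diagonal (fun i => Polynomial.eval (d i) q) := by
  induction q using Polynomial.induction_on' with
  | add f g hf hg => simp [map_add, hf, hg, Polynomial.eval_add, Matrix.diagonal_add]
  | monomial n c =>
      rw [Polynomial.aeval_monomial, Algebra.algebraMap_eq_smul_one, smul_mul_assoc, one_mul,
        Matrix.diagonal_pow]
      ext i j
      by_cases h : i = j
      · subst h; simp [Matrix.diagonal_apply_eq, Polynomial.eval_monomial]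
      · simp [Matrix.diagonal_apply_ne _ h, h]

variable (V : Matrix (Fin P) (Fin P) ℝ)

lemma conj_mul (hV' : Vᵀ * V = 1) (A C : Matrix (Fin P) (Fin P) ℝ) :
    (V * A * Vᵀ) * (V * C * Vᵀ) = V * (A * C) * Vᵀ := by
  have hcancel : ∀ X : Matrix (Fin P) (Fin P) ℝ, Vᵀ * (V * X) = X := fun X => by
    rw [← Matrix.mul_assoc, hV', Matrix.one_mul]
  simp only [Matrix.mul_assoc, hcancel]

lemma conj_one (hV : V * Vᵀ = 1) : V * (1 : Matrix (Fin P) (Fin P) ℝ) * Vᵀ = 1 := by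
  rw [Matrix.mul_one, hV]

lemma conj_pow (hV : V * Vᵀ = 1) (hV' : Vᵀ * V = 1) (A : Matrix (Fin P) (Fin P) ℝ) (n : ℕ) :
    (V * A * Vᵀ) ^ n = V * A ^ n * Vᵀ := by
  induction n with
  | zero => rw [pow_zero, pow_zero, conj_one V hV]
  | succ n ih => rw [pow_succ, pow_succ, ih, conj_mul V hV']

lemma conj_aeval (hV : V * Vᵀ = 1) (hV' : Vᵀ * V = 1) (A : Matrix (Fin P) (Fin P) ℝ)
    (q : Polynomial ℝ) :
    Polynomial.aeval (V * A * Vᵀ) q = V * Polynomial.aeval A q * Vᵀ := by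
  induction q using Polynomial.induction_on' with
  | add f g hf hg => simp [map_add, hf, hg, Matrix.mul_add, Matrix.add_mul]
  | monomial n c =>
      rw [Polynomial.aeval_monomial, Polynomial.aeval_monomial,
        Algebra.algebraMap_eq_smul_one, smul_mul_assoc, one_mul, conj_pow V hV hV',
        smul_mul_assoc, one_mul, Matrix.mul_smul, Matrix.smul_mul]

lemma conj_sum (g : ℕ → Fin P → ℝ) (s : Finset ℕ) :
    ∑ j ∈ s, V * Matrix.diagonal (g j) * Vᵀ
      = V * Matrix.diagonal (fun i => ∑ j ∈ s, g j i) * Vᵀ := by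
  have h1 : ∑ j ∈ s, V * Matrix.diagonal (g j) * Vᵀ
      = V * (∑ j ∈ s, Matrix.diagonal (g j)) * Vᵀ := by
    rw [Finset.mul_sum, Finset.sum_mul]
  have h2 : (∑ j ∈ s, Matrix.diagonal (g j))
      = Matrix.diagonal (fun i => ∑ j ∈ s, g j i) := by
    ext i i'
    by_cases h : i = i'
    · subst h; simp [Matrix.sum_apply]
    · simp [Matrix.sum_apply, Matrix.diagonal_apply_ne _ h]
  rw [h1, h2]

lemma dot_mulVec_left {n₁ n₂ : Type*} [Fintype n₁] [Fintype n₂]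
    (N : Matrix n₁ n₂ ℝ) (x : n₂ → ℝ) (y : n₁ → ℝ) :
    (N *ᵥ x) ⬝ᵥ y = x ⬝ᵥ (Nᵀ *ᵥ y) := by
  rw [dotProduct_comm, Matrix.dotProduct_mulVec, Matrix.mulVec_transpose,
    dotProduct_comm]

end Spectral
section Dynamics

variable (α₁ : ℝ) (X : Matrix (Fin B × Fin m) (Fin p) ℝ) (βstar : Fin p → ℝ)
  (η : Fin B × Fin m → ℝ) (τ : Equiv.Perm (Fin B))

lemma Wb_transpose (b : Fin B) : (Wb X b)ᵀ = Wb X b := by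
  rw [Wb, Matrix.transpose_smul, Matrix.transpose_mul, Matrix.transpose_transpose]

lemma batch_mulVec (β : Fin p → ℝ) (b : Fin B) (i : Fin m) :
    (X *ᵥ β) (b, i) = (batch X b *ᵥ β) i := rfl

lemma step_err (b : Fin B) (β : Fin p → ℝ) :
    step α₁ X (X *ᵥ βstar + η) b β - βstar
      = ((1 : Matrix (Fin p) (Fin p) ℝ) - α₁ • Wb X b) *ᵥ (β - βstar)
        + ((B : ℝ) * α₁ / ((B * m : ℕ) : ℝ)) • ((batch X b)ᵀ *ᵥ (fun i => η (b, i))) := by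
  rw [step]
  have hy : (fun i => (X *ᵥ βstar + η) (b, i))
      = batch X b *ᵥ βstar + (fun i => η (b, i)) := by
    funext i; rfl
  rw [hy]
  have h1 : batch X b *ᵥ β - (batch X b *ᵥ βstar + fun i => η (b, i))
      = batch X b *ᵥ (β - βstar) - fun i => η (b, i) := by
    rw [Matrix.mulVec_sub]; abel
  rw [h1, Matrix.mulVec_sub, smul_sub, Matrix.sub_mulVec, Matrix.one_mulVec]
  rw [Wb, smul_smul, Matrix.smul_mulVec, Matrix.mulVec_mulVec]
  have hc : α₁ * ((B : ℝ) / ((B * m : ℕ) : ℝ)) = (B : ℝ) * α₁ / ((B * m : ℕ) : ℝ) := by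
    ring
  rw [hc]
  abel

/-- `∏` over a list of positions, decreasing order. -/
def Plist (l : List (Fin B)) : Matrix (Fin p) (Fin p) ℝ :=
  (l.reverse.map (fun j => (1 : Matrix (Fin p) (Fin p) ℝ) - α₁ • Wb X (τ j))).prod

lemma Plist_nil : Plist α₁ X τ [] = 1 := rfl

lemma Plist_cons (j : Fin B) (l : List (Fin B)) :
    Plist α₁ X τ (j :: l)
      = Plist α₁ X τ l * ((1 : Matrix (Fin p) (Fin p) ℝ) - α₁ • Wb X (τ j)) := by
  simp [Plist, List.reverse_cons]

/-- accumulated noise over a list of positions -/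
def nzl : List (Fin B) → (Fin p → ℝ)
  | [] => 0
  | j :: l => Plist α₁ X τ l *ᵥ
        (((B : ℝ) * α₁ / ((B * m : ℕ) : ℝ)) • ((batch X (τ j))ᵀ *ᵥ fun i => η (τ j, i)))
      + nzl l

lemma foldl_err (l : List (Fin B)) : ∀ β : Fin p → ℝ,
    (List.foldl (fun β j => step α₁ X (X *ᵥ βstar + η) (τ j) β) β l) - βstar
      = Plist α₁ X τ l *ᵥ (β - βstar) + nzl α₁ X η τ l := by
  induction l with
  | nil =>
      intro β
      simp [Plist_nil, nzl, Matrix.one_mulVec]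
  | cons j l ih =>
      intro β
      rw [List.foldl_cons, ih, step_err]
      rw [Matrix.mulVec_add, Matrix.mulVec_mulVec, ← Plist_cons]
      show _ = _ + nzl α₁ X η τ (j :: l)
      rw [nzl]
      abel

lemma epoch_err (β : Fin p → ℝ) :
    epoch α₁ X (X *ᵥ βstar + η) τ β - βstar
      = prodAll α₁ (Wb X) τ *ᵥ (β - βstar) + nzl α₁ X η τ (List.finRange B) := by
  rw [epoch]
  exact foldl_err α₁ X βstar η τ (List.finRange B) β

lemma nzl_suffix : ∀ d t : ℕ, B ≤ t + d →
    nzl α₁ X η τ ((List.finRange B).filter (fun j : Fin B => decide (t ≤ (j : ℕ))))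
      = ∑ j ∈ Finset.univ.filter (fun j : Fin B => t ≤ (j : ℕ)),
          prodAfter α₁ (Wb X) τ (τ j) *ᵥ
            (((B : ℝ) * α₁ / ((B * m : ℕ) : ℝ)) • ((batch X (τ j))ᵀ *ᵥ fun i => η (τ j, i))) := by
  intro d
  induction d with
  | zero =>
      intro t ht
      rw [Nat.add_zero] at ht
      rw [filter_le_of_ge t ht]
      have h1 : (Finset.univ.filter (fun j : Fin B => t ≤ (j : ℕ))) = ∅ := by
        ext j; simp; omega
      rw [h1]
      simp [nzl]
  | succ d ih =>
      intro t ht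
      by_cases htB : B ≤ t
      · rw [filter_le_of_ge t htB]
        have h1 : (Finset.univ.filter (fun j : Fin B => t ≤ (j : ℕ))) = ∅ := by
          ext j; simp; omega
        rw [h1]
        simp [nzl]
      · push_neg at htB
        rw [filter_le_succ t htB, nzl, ih (t + 1) (by omega)]
        have hpa : Plist α₁ X τ ((List.finRange B).filter (fun j : Fin B => decide (t + 1 ≤ (j : ℕ))))
            = prodAfter α₁ (Wb X) τ (τ ⟨t, htB⟩) := by
          rw [prodAfter_eq, Equiv.symm_apply_apply]
          rfl
        rw [hpa]
        have hins : (Finset.univ.filter (fun j : Fin B => t ≤ (j : ℕ)))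
            = insert (⟨t, htB⟩ : Fin B) (Finset.univ.filter (fun j : Fin B => t + 1 ≤ (j : ℕ))) := by
          ext j
          simp only [Finset.mem_filter, Finset.mem_univ, true_and, Finset.mem_insert]
          constructor
          · intro h
            rcases eq_or_lt_of_le h with h | h
            · exact Or.inl (Fin.ext h.symm)
            · exact Or.inr h
          · rintro (rfl | h)
            · exact le_refl t
            · omega
        have hnot : (⟨t, htB⟩ : Fin B) ∉ (Finset.univ.filter (fun j : Fin B => t + 1 ≤ (j : ℕ))) := by
          simp
        rw [hins, Finset.sum_insert hnot]

lemma nzl_finRange :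
    nzl α₁ X η τ (List.finRange B)
      = ∑ b : Fin B, prodAfter α₁ (Wb X) τ b *ᵥ
          (((B : ℝ) * α₁ / ((B * m : ℕ) : ℝ)) • ((batch X b)ᵀ *ᵥ fun i => η (b, i))) := by
  have h0 : (List.finRange B).filter (fun j : Fin B => decide (0 ≤ (j : ℕ))) = List.finRange B := by
    apply List.filter_eq_self.mpr; intro a _; simp
  have h1 : (Finset.univ.filter (fun j : Fin B => 0 ≤ (j : ℕ))) = Finset.univ := by
    ext j; simp
  have h := nzl_suffix α₁ X η τ B 0 (by omega)
  rw [h0, h1] at h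
  rw [h]
  exact Equiv.sum_comp τ (fun b => prodAfter α₁ (Wb X) τ b *ᵥ
    (((B : ℝ) * α₁ / ((B * m : ℕ) : ℝ)) • ((batch X b)ᵀ *ᵥ fun i => η (b, i))))

lemma sum_batch_mulVec :
    ∑ b : Fin B, (batch X b)ᵀ *ᵥ (fun i => η (b, i)) = Xᵀ *ᵥ η := by
  funext j
  rw [Finset.sum_apply]
  simp only [Matrix.mulVec, dotProduct, Matrix.transpose_apply, batch, Matrix.of_apply]
  exact (Fintype.sum_prod_type (f := fun x : Fin B × Fin m => X x j * η x)).symm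

lemma sum_batch_mul :
    ∑ b : Fin B, (batch X b)ᵀ * batch X b = Xᵀ * X := by
  ext j j'
  rw [Matrix.sum_apply]
  simp only [Matrix.mul_apply, Matrix.transpose_apply, batch, Matrix.of_apply]
  exact (Fintype.sum_prod_type (f := fun x : Fin B × Fin m => X x j * X x j')).symm

end Dynamics
section Averaging

variable (α₁ : ℝ) (X : Matrix (Fin B × Fin m) (Fin p) ℝ) (βstar : Fin p → ℝ)
  (η : Fin B × Fin m → ℝ)

lemma sum_mulVec {ι : Type*} (s : Finset ι) (A : ι → Matrix (Fin p) (Fin p) ℝ)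
    (v : Fin p → ℝ) : (∑ i ∈ s, A i) *ᵥ v = ∑ i ∈ s, A i *ᵥ v := by
  refine Finset.cons_induction_on s (by simp [Matrix.zero_mulVec]) ?_
  intro a t ha ih
  rw [Finset.sum_cons, Finset.sum_cons, Matrix.add_mulVec, ih]

lemma mulVec_sumv {ι : Type*} (s : Finset ι) (A : Matrix (Fin p) (Fin p) ℝ)
    (v : ι → Fin p → ℝ) : A *ᵥ (∑ i ∈ s, v i) = ∑ i ∈ s, A *ᵥ v i := by
  refine Finset.cons_induction_on s (by simp [Matrix.mulVec_zero]) ?_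
  intro a t ha ih
  rw [Finset.sum_cons, Finset.sum_cons, Matrix.mulVec_add, ih]

lemma epoch_avg (Pmat Mmat : Matrix (Fin p) (Fin p) ℝ)
    (hM : ∑ σ : Equiv.Perm (Fin B), prodAll α₁ (Wb X) σ = (B.factorial : ℝ) • Mmat)
    (hN : ∀ b : Fin B, ∑ σ : Equiv.Perm (Fin B), prodAfter α₁ (Wb X) σ b
        = (B.factorial : ℝ) • Pmat)
    (β : Fin p → ℝ) :
    ∑ σ : Equiv.Perm (Fin B), (epoch α₁ X (X *ᵥ βstar + η) σ β - βstar)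
      = (B.factorial : ℝ) • (Mmat *ᵥ (β - βstar)
          + ((B : ℝ) * α₁ / ((B * m : ℕ) : ℝ)) • ((Pmat * Xᵀ) *ᵥ η)) := by
  have h1 : ∀ σ : Equiv.Perm (Fin B),
      epoch α₁ X (X *ᵥ βstar + η) σ β - βstar
        = prodAll α₁ (Wb X) σ *ᵥ (β - βstar) + nzl α₁ X η σ (List.finRange B) :=
    fun σ => epoch_err α₁ X βstar η σ β
  rw [Finset.sum_congr rfl (fun σ _ => h1 σ), Finset.sum_add_distrib]
  have h2 : ∑ σ : Equiv.Perm (Fin B), prodAll α₁ (Wb X) σ *ᵥ (β - βstar)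
      = ((B.factorial : ℝ) • Mmat) *ᵥ (β - βstar) := by
    rw [← hM, sum_mulVec]
  have h3 : ∑ σ : Equiv.Perm (Fin B), nzl α₁ X η σ (List.finRange B)
      = (B.factorial : ℝ) •
          (((B : ℝ) * α₁ / ((B * m : ℕ) : ℝ)) • ((Pmat * Xᵀ) *ᵥ η)) := by
    have h4 : ∀ σ : Equiv.Perm (Fin B), nzl α₁ X η σ (List.finRange B)
        = ∑ b : Fin B, prodAfter α₁ (Wb X) σ b *ᵥ
            (((B : ℝ) * α₁ / ((B * m : ℕ) : ℝ)) • ((batch X b)ᵀ *ᵥ fun i => η (b, i))) :=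
      fun σ => nzl_finRange α₁ X η σ
    rw [Finset.sum_congr rfl (fun σ _ => h4 σ), Finset.sum_comm]
    have h5 : ∀ b : Fin B,
        ∑ σ : Equiv.Perm (Fin B), prodAfter α₁ (Wb X) σ b *ᵥ
            (((B : ℝ) * α₁ / ((B * m : ℕ) : ℝ)) • ((batch X b)ᵀ *ᵥ fun i => η (b, i)))
          = (B.factorial : ℝ) • (Pmat *ᵥ
              (((B : ℝ) * α₁ / ((B * m : ℕ) : ℝ)) • ((batch X b)ᵀ *ᵥ fun i => η (b, i)))) := by
      intro b
      rw [← sum_mulVec, hN b, Matrix.smul_mulVec]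
    rw [Finset.sum_congr rfl (fun b _ => h5 b), ← Finset.smul_sum]
    congr 1
    have h6 : ∀ b : Fin B,
        Pmat *ᵥ (((B : ℝ) * α₁ / ((B * m : ℕ) : ℝ)) • ((batch X b)ᵀ *ᵥ fun i => η (b, i)))
          = ((B : ℝ) * α₁ / ((B * m : ℕ) : ℝ)) •
              (Pmat *ᵥ ((batch X b)ᵀ *ᵥ fun i => η (b, i))) :=
      fun b => Matrix.mulVec_smul _ _ _
    rw [Finset.sum_congr rfl (fun b _ => h6 b), ← Finset.smul_sum]
    congr 1
    rw [← mulVec_sumv, sum_batch_mulVec, Matrix.mulVec_mulVec]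
  rw [h2, h3, Matrix.smul_mulVec, smul_add]

end Averaging
section ClosedForm

variable (α₁ : ℝ) (X : Matrix (Fin B × Fin m) (Fin p) ℝ) (βstar : Fin p → ℝ)
  (η : Fin B × Fin m → ℝ)

lemma meanIter_closed (β₀ : Fin p → ℝ) (Pmat Mmat : Matrix (Fin p) (Fin p) ℝ)
    (hM : ∑ σ : Equiv.Perm (Fin B), prodAll α₁ (Wb X) σ = (B.factorial : ℝ) • Mmat)
    (hN : ∀ b : Fin B, ∑ σ : Equiv.Perm (Fin B), prodAfter α₁ (Wb X) σ b
        = (B.factorial : ℝ) • Pmat) (k : ℕ) :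
    meanIter α₁ X (X *ᵥ βstar + η) β₀ k - βstar
      = Mmat ^ k *ᵥ (β₀ - βstar)
        + (((B : ℝ) * α₁ / ((B * m : ℕ) : ℝ)) •
            ((∑ j ∈ Finset.range k, Mmat ^ j) * (Pmat * Xᵀ))) *ᵥ η := by
  set c : ℝ := (B : ℝ) * α₁ / ((B * m : ℕ) : ℝ) with hc
  induction k with
  | zero =>
      simp [meanIter, Matrix.one_mulVec, Matrix.zero_mulVec]
  | succ k ih =>
      have hfac : (B.factorial : ℝ) ≠ 0 := Nat.cast_ne_zero.mpr B.factorial_ne_zero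
      have hmi : meanIter α₁ X (X *ᵥ βstar + η) β₀ (k + 1)
          = ((B.factorial : ℝ))⁻¹ • ∑ σ : Equiv.Perm (Fin B),
              epoch α₁ X (X *ᵥ βstar + η) σ (meanIter α₁ X (X *ᵥ βstar + η) β₀ k) := rfl
      rw [hmi]
      have hconst : ∑ _σ : Equiv.Perm (Fin B), βstar = (B.factorial : ℝ) • βstar := by
        rw [Finset.sum_const, Finset.card_univ, Fintype.card_perm, Fintype.card_fin,
          ← Nat.cast_smul_eq_nsmul ℝ]
      have hsum : ∑ σ : Equiv.Perm (Fin B),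
          epoch α₁ X (X *ᵥ βstar + η) σ (meanIter α₁ X (X *ᵥ βstar + η) β₀ k)
            = (B.factorial : ℝ) •
                (Mmat *ᵥ (meanIter α₁ X (X *ᵥ βstar + η) β₀ k - βstar)
                  + c • ((Pmat * Xᵀ) *ᵥ η))
              + (B.factorial : ℝ) • βstar := by
        calc ∑ σ : Equiv.Perm (Fin B),
              epoch α₁ X (X *ᵥ βstar + η) σ (meanIter α₁ X (X *ᵥ βstar + η) β₀ k)
            = ∑ σ : Equiv.Perm (Fin B),
                ((epoch α₁ X (X *ᵥ βstar + η) σ (meanIter α₁ X (X *ᵥ βstar + η) β₀ k)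
                  - βstar) + βstar) := by simp
          _ = ∑ σ : Equiv.Perm (Fin B),
                (epoch α₁ X (X *ᵥ βstar + η) σ (meanIter α₁ X (X *ᵥ βstar + η) β₀ k)
                  - βstar) + ∑ _σ : Equiv.Perm (Fin B), βstar := Finset.sum_add_distrib
          _ = _ := by
              rw [epoch_avg α₁ X βstar η Pmat Mmat hM hN
                (meanIter α₁ X (X *ᵥ βstar + η) β₀ k), hconst]
      rw [hsum, smul_add, smul_smul, inv_mul_cancel₀ hfac, one_smul, smul_smul,
        inv_mul_cancel₀ hfac, one_smul, add_sub_cancel_right, ih]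
      rw [Matrix.mulVec_add, Matrix.mulVec_mulVec, Matrix.mulVec_mulVec, Matrix.mul_smul]
      have h3 : c • ((Pmat * Xᵀ) *ᵥ η) = (c • (Pmat * Xᵀ)) *ᵥ η :=
        (Matrix.smul_mulVec _ _ _).symm
      rw [h3, add_assoc, ← Matrix.add_mulVec, ← smul_add]
      have h4 : Mmat * ((∑ j ∈ Finset.range k, Mmat ^ j) * (Pmat * Xᵀ)) + Pmat * Xᵀ
          = (∑ j ∈ Finset.range (k + 1), Mmat ^ j) * (Pmat * Xᵀ) := by
        rw [geom_sum_succ, Matrix.add_mul, Matrix.one_mul, Matrix.mul_assoc]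
      rw [h4, ← pow_succ']
end ClosedForm
section Integration

open MeasureTheory

lemma integral_quad {Ω : Type*} [MeasurableSpace Ω] (μ : Measure Ω) [IsProbabilityMeasure μ]
    (η : Ω → Fin B × Fin m → ℝ) (σ : ℝ)
    (hint1 : ∀ i, Integrable (fun ω => η ω i) μ)
    (hint2 : ∀ i j, Integrable (fun ω => η ω i * η ω j) μ)
    (hmean : ∀ i, ∫ ω, η ω i ∂μ = 0)
    (hcov : ∀ i j, ∫ ω, η ω i * η ω j ∂μ = if i = j then σ ^ 2 else 0)
    (a : Fin p → ℝ) (N : Matrix (Fin p) (Fin B × Fin m) ℝ) (Sg : Matrix (Fin p) (Fin p) ℝ) :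
    ∫ ω, (a + N *ᵥ η ω) ⬝ᵥ (Sg *ᵥ (a + N *ᵥ η ω)) ∂μ
      = a ⬝ᵥ (Sg *ᵥ a) + σ ^ 2 * ∑ r, (Nᵀ * Sg * N) r r := by
  set Q : Matrix (Fin B × Fin m) (Fin B × Fin m) ℝ := Nᵀ * Sg * N with hQ
  set u : Fin B × Fin m → ℝ := Nᵀ *ᵥ (Sgᵀ *ᵥ a) + Nᵀ *ᵥ (Sg *ᵥ a) with hu
  have hpt : ∀ x : Fin B × Fin m → ℝ,
      (a + N *ᵥ x) ⬝ᵥ (Sg *ᵥ (a + N *ᵥ x))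
        = a ⬝ᵥ (Sg *ᵥ a) + (∑ r, u r * x r + ∑ r, ∑ s, Q r s * (x r * x s)) := by
    intro x
    have t2 : a ⬝ᵥ (Sg *ᵥ (N *ᵥ x)) = (Nᵀ *ᵥ (Sgᵀ *ᵥ a)) ⬝ᵥ x := by
      rw [Matrix.dotProduct_mulVec, Matrix.dotProduct_mulVec, Matrix.mulVec_transpose,
        Matrix.mulVec_transpose]
    have t3 : (N *ᵥ x) ⬝ᵥ (Sg *ᵥ a) = (Nᵀ *ᵥ (Sg *ᵥ a)) ⬝ᵥ x := by
      rw [dot_mulVec_left, dotProduct_comm]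
    have t4 : (N *ᵥ x) ⬝ᵥ (Sg *ᵥ (N *ᵥ x)) = ∑ r, ∑ s, Q r s * (x r * x s) := by
      rw [dot_mulVec_left, Matrix.mulVec_mulVec, Matrix.mulVec_mulVec, ← hQ]
      simp only [dotProduct, Matrix.mulVec]
      refine Finset.sum_congr rfl fun r _ => ?_
      rw [Finset.mul_sum]
      refine Finset.sum_congr rfl fun s _ => ?_
      show x r * (Q r s * x s) = Q r s * (x r * x s)
      ring
    rw [Matrix.mulVec_add, dotProduct_add, add_dotProduct, add_dotProduct,
      t2, t3, t4]
    have t5 : ∑ r, u r * x r = (Nᵀ *ᵥ (Sgᵀ *ᵥ a)) ⬝ᵥ x + (Nᵀ *ᵥ (Sg *ᵥ a)) ⬝ᵥ x := by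
      rw [hu, ← add_dotProduct]
      rfl
    rw [t5]
    ring
  have hfun : (fun ω => (a + N *ᵥ η ω) ⬝ᵥ (Sg *ᵥ (a + N *ᵥ η ω)))
      = fun ω => a ⬝ᵥ (Sg *ᵥ a)
          + (∑ r, u r * η ω r + ∑ r, ∑ s, Q r s * (η ω r * η ω s)) :=
    funext fun ω => hpt (η ω)
  rw [hfun]
  have hI2 : Integrable (fun ω => ∑ r, u r * η ω r) μ :=
    integrable_finset_sum _ (fun r _ => (hint1 r).const_mul (u r))
  have hI3' : ∀ r : Fin B × Fin m,
      Integrable (fun ω => ∑ s, Q r s * (η ω r * η ω s)) μ :=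
    fun r => integrable_finset_sum _ (fun s _ => (hint2 r s).const_mul (Q r s))
  have hI3 : Integrable (fun ω => ∑ r, ∑ s, Q r s * (η ω r * η ω s)) μ :=
    integrable_finset_sum _ (fun r _ => hI3' r)
  have hI23 : Integrable (fun ω =>
      ∑ r, u r * η ω r + ∑ r, ∑ s, Q r s * (η ω r * η ω s)) μ := by
    exact hI2.add hI3
  rw [integral_add (integrable_const _) hI23, integral_const]
  rw [integral_add hI2 hI3,
    integral_finset_sum _ (fun r _ => (hint1 r).const_mul (u r)),
    integral_finset_sum _ (fun r _ => hI3' r)]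
  have e1 : ∀ r, ∫ ω, u r * η ω r ∂μ = 0 := fun r => by
    rw [integral_const_mul, hmean r, mul_zero]
  have e2 : ∀ r, ∫ ω, ∑ s, Q r s * (η ω r * η ω s) ∂μ = Q r r * σ ^ 2 := by
    intro r
    rw [integral_finset_sum _ (fun s _ => (hint2 r s).const_mul (Q r s))]
    have h6 : ∀ s, ∫ ω, Q r s * (η ω r * η ω s) ∂μ
        = Q r s * (if r = s then σ ^ 2 else 0) := fun s => by
      rw [integral_const_mul, hcov r s]
    rw [Finset.sum_congr rfl (fun s _ => h6 s)]
    simp [mul_ite, mul_zero]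
  rw [Finset.sum_congr rfl (fun r _ => e1 r), Finset.sum_congr rfl (fun r _ => e2 r)]
  simp [measure_univ, ← Finset.sum_mul, mul_comm]

end Integration
section ConjHelpers

variable {P : ℕ} (V : Matrix (Fin P) (Fin P) ℝ)

lemma Dg_transpose (g : Fin P → ℝ) :
    (V * Matrix.diagonal g * Vᵀ)ᵀ = V * Matrix.diagonal g * Vᵀ := by
  rw [Matrix.transpose_mul, Matrix.transpose_mul, Matrix.transpose_transpose,
    Matrix.diagonal_transpose, Matrix.mul_assoc]

lemma dot_conj (A : Matrix (Fin P) (Fin P) ℝ) (x : Fin P → ℝ) :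
    x ⬝ᵥ ((V * A * Vᵀ) *ᵥ x) = (Vᵀ *ᵥ x) ⬝ᵥ (A *ᵥ (Vᵀ *ᵥ x)) := by
  rw [← Matrix.mulVec_mulVec, ← Matrix.mulVec_mulVec, Matrix.dotProduct_mulVec x V,
    ← Matrix.mulVec_transpose]

lemma trace_conj (hVt : Vᵀ * V = 1) (g : Fin P → ℝ) :
    ∑ i, (V * Matrix.diagonal g * Vᵀ) i i = ∑ i, g i := by
  have h1 : ∑ i, (V * Matrix.diagonal g * Vᵀ) i i = (V * Matrix.diagonal g * Vᵀ).trace := by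
    simp [Matrix.trace, Matrix.diag]
  rw [h1, Matrix.trace_mul_comm (V * Matrix.diagonal g) Vᵀ, ← Matrix.mul_assoc, hVt,
    Matrix.one_mul, Matrix.trace_diagonal]

lemma diag_dot (g : Fin P → ℝ) (w : Fin P → ℝ) :
    w ⬝ᵥ (Matrix.diagonal g *ᵥ w) = ∑ i, g i * w i ^ 2 := by
  simp only [dotProduct, Matrix.mulVec_diagonal]
  exact Finset.sum_congr rfl fun i _ => by ring

end ConjHelpers
section MoreConj

variable {P : ℕ} (V : Matrix (Fin P) (Fin P) ℝ)

lemma Dg_mul (hVt : Vᵀ * V = 1) (g h : Fin P → ℝ) :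
    (V * Matrix.diagonal g * Vᵀ) * (V * Matrix.diagonal h * Vᵀ)
      = V * Matrix.diagonal (fun i => g i * h i) * Vᵀ := by
  rw [conj_mul V hVt, Matrix.diagonal_mul_diagonal]

lemma pow_Dg (hVV : V * Vᵀ = 1) (hVt : Vᵀ * V = 1) (g : Fin P → ℝ) (k : ℕ) :
    (V * Matrix.diagonal g * Vᵀ) ^ k = V * Matrix.diagonal (fun i => g i ^ k) * Vᵀ := by
  rw [conj_pow V hVV hVt, Matrix.diagonal_pow]
  rfl

lemma sum_pow_Dg (hVV : V * Vᵀ = 1) (hVt : Vᵀ * V = 1) (g : Fin P → ℝ) (k : ℕ) :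
    ∑ j ∈ Finset.range k, (V * Matrix.diagonal g * Vᵀ) ^ j
      = V * Matrix.diagonal (fun i => ∑ j ∈ Finset.range k, g i ^ j) * Vᵀ := by
  rw [Finset.sum_congr rfl (fun j _ => pow_Dg V hVV hVt g j)]
  exact conj_sum V (fun j i => g i ^ j) (Finset.range k)

lemma one_sub_Dg (hVV : V * Vᵀ = 1) (g : Fin P → ℝ) :
    (1 : Matrix (Fin P) (Fin P) ℝ) - V * Matrix.diagonal g * Vᵀ
      = V * Matrix.diagonal (fun i => 1 - g i) * Vᵀ := by
  have h1 : (1 : Matrix (Fin P) (Fin P) ℝ) = V * Matrix.diagonal (fun _ => (1 : ℝ)) * Vᵀ := by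
    rw [Matrix.diagonal_one, conj_one V hVV]
  rw [h1, ← Matrix.sub_mul, ← Matrix.mul_sub, Matrix.diagonal_sub]

lemma smul_Dg (c : ℝ) (g : Fin P → ℝ) :
    c • (V * Matrix.diagonal g * Vᵀ) = V * Matrix.diagonal (fun i => c * g i) * Vᵀ := by
  rw [← Matrix.smul_mul, ← Matrix.mul_smul, ← Matrix.diagonal_smul]
  rfl

lemma trace_XRXt {n₁ : Type*} [Fintype n₁] (X : Matrix n₁ (Fin P) ℝ)
    (R : Matrix (Fin P) (Fin P) ℝ) :
    ∑ r, (X * R * Xᵀ) r r = ∑ i, (R * (Xᵀ * X)) i i := by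
  have h1 : ∑ r, (X * R * Xᵀ) r r = (X * R * Xᵀ).trace := by simp [Matrix.trace, Matrix.diag]
  have h2 : ∑ i, (R * (Xᵀ * X)) i i = (R * (Xᵀ * X)).trace := by
    simp [Matrix.trace, Matrix.diag]
  rw [h1, h2, Matrix.trace_mul_comm (X * R) Xᵀ, ← Matrix.mul_assoc,
    Matrix.trace_mul_comm (Xᵀ * X) R]

lemma smul_diag_sum {n₁ : Type*} [Fintype n₁] (c : ℝ) (M : Matrix n₁ n₁ ℝ) :
    ∑ r, (c • M) r r = c * ∑ r, M r r := by
  simp [Finset.mul_sum]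

end MoreConj
end MBGDAux

open MBGDAux

/-- Proposition `fixedp_error_limit`, second part. Under the assumptions of
Statement 8, and assuming additionally that `VᵀΣV = Λ` is diagonal with entries
`λ_1, …, λ_p`, the generalization error of mini-batch gradient descent with random
reshuffling, `B` mini-batches and step size `α/B` is
`R_X(β̄_k) = ∑_i λ_i[1 − αλ̂_i(1 − p(λ̂_i))]^{2k}[Vᵀ(β₀ − β*)]_i²
  + (σ²/n) ∑_i (λ_i/λ̂_i)(1 − [1 − αλ̂_i(1 − p(λ̂_i))]^k)²`. -/
theorem fixedp_error_limit_risk {p B m : ℕ} (hB : 1 ≤ B) (hm : 1 ≤ m) (hp : 1 ≤ p)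
    (α : ℝ) (hα : 0 ≤ α) (X : Matrix (Fin B × Fin m) (Fin p) ℝ)
    (βstar β₀ : Fin p → ℝ)
    {Ω : Type*} [MeasurableSpace Ω] (μ : Measure Ω) [IsProbabilityMeasure μ]
    (η : Ω → Fin B × Fin m → ℝ) (σ : ℝ) (hσ : 0 ≤ σ)
    (hint1 : ∀ i, Integrable (fun ω => η ω i) μ)
    (hint2 : ∀ i j, Integrable (fun ω => η ω i * η ω j) μ)
    (hmean : ∀ i, ∫ ω, η ω i ∂μ = 0)
    (hcov : ∀ i j, ∫ ω, η ω i * η ω j ∂μ = if i = j then σ ^ 2 else 0)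
    (Sg : Matrix (Fin p) (Fin p) ℝ) (hSg : Sg.PosSemidef)
    (W : Matrix (Fin p) (Fin p) ℝ) (hW : W = (((B * m : ℕ) : ℝ))⁻¹ • (Xᵀ * X))
    (q : Polynomial ℝ)
    (hPiEq : ∀ b : Fin B, Pib (α / B) (Wb X) b = 1 - Polynomial.aeval W q)
    (hpn : p ≤ B * m) (hXrank : X.rank = p)
    (hPiUnit : IsUnit ((1 : Matrix (Fin p) (Fin p) ℝ) - Polynomial.aeval W q))
    (U : Matrix (Fin B × Fin m) (Fin B × Fin m) ℝ)
    (S : Matrix (Fin B × Fin m) (Fin p) ℝ) (V : Matrix (Fin p) (Fin p) ℝ)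
    (hU : Uᵀ * U = 1 ∧ U * Uᵀ = 1) (hV : Vᵀ * V = 1 ∧ V * Vᵀ = 1)
    (hX : X = U * S * Vᵀ)
    (κ : Fin p ↪ Fin B × Fin m)
    (hSdiag : ∀ (r : Fin B × Fin m) (j : Fin p), r ≠ κ j → S r j = 0)
    (lamh : Fin p → ℝ) (hlam : (((B * m : ℕ) : ℝ))⁻¹ • (Sᵀ * S) = Matrix.diagonal lamh)
    (hlampos : ∀ i, 0 < lamh i)
    (lam : Fin p → ℝ) (hΛ : Vᵀ * Sg * V = Matrix.diagonal lam) :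
    ∀ k : ℕ,
      (∫ ω, (meanIter (α / B) X (X *ᵥ βstar + η ω) β₀ k - βstar) ⬝ᵥ
          (Sg *ᵥ (meanIter (α / B) X (X *ᵥ βstar + η ω) β₀ k - βstar)) ∂μ) =
        (∑ i, lam i * (1 - α * lamh i * (1 - Polynomial.eval (lamh i) q)) ^ (2 * k) *
            ((Vᵀ *ᵥ (β₀ - βstar)) i) ^ 2) +
          σ ^ 2 / ((B * m : ℕ) : ℝ) *
            ∑ i, lam i / lamh i *
              (1 - (1 - α * lamh i * (1 - Polynomial.eval (lamh i) q)) ^ k) ^ 2 := by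
  intro k
  have hVt : Vᵀ * V = 1 := hV.1
  have hVV : V * Vᵀ = 1 := hV.2
  have hBR : (B : ℝ) ≠ 0 := Nat.cast_ne_zero.mpr (by omega)
  have hnR : ((B * m : ℕ) : ℝ) ≠ 0 :=
    Nat.cast_ne_zero.mpr (Nat.mul_ne_zero (by omega) (by omega))
  have hfac : (B.factorial : ℝ) ≠ 0 := Nat.cast_ne_zero.mpr B.factorial_ne_zero
  have hXtX : Xᵀ * X = V * (Sᵀ * S) * Vᵀ := by
    have hUc : ∀ Y : Matrix (Fin B × Fin m) (Fin p) ℝ, Uᵀ * (U * Y) = Y := fun Y => by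
      rw [← Matrix.mul_assoc, hU.1, Matrix.one_mul]
    rw [hX, Matrix.transpose_mul, Matrix.transpose_mul, Matrix.transpose_transpose]
    simp only [Matrix.mul_assoc, hUc]
  have hWspec : W = V * Matrix.diagonal lamh * Vᵀ := by
    rw [hW, hXtX, ← hlam, Matrix.mul_smul, Matrix.smul_mul]
  set πf : Fin p → ℝ := fun i => 1 - Polynomial.eval (lamh i) q with hπf
  set μf : Fin p → ℝ := fun i => 1 - α * lamh i * (1 - Polynomial.eval (lamh i) q) with hμf
  set Pmat : Matrix (Fin p) (Fin p) ℝ := V * Matrix.diagonal πf * Vᵀ with hPmat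
  set Mmat : Matrix (Fin p) (Fin p) ℝ := V * Matrix.diagonal μf * Vᵀ with hMmat
  have hPi : (1 : Matrix (Fin p) (Fin p) ℝ) - Polynomial.aeval W q = Pmat := by
    rw [hWspec, conj_aeval V hVV hVt, aeval_diagonal, one_sub_Dg V hVV, hPmat]
  have hPB : ∀ b : Fin B, ∑ σ' : Equiv.Perm (Fin B), prodBefore (α / B) (Wb X) σ' b
      = (B.factorial : ℝ) • Pmat := by
    intro b
    have h := hPiEq b
    rw [hPi] at h
    rw [Pib] at h
    calc ∑ σ' : Equiv.Perm (Fin B), prodBefore (α / B) (Wb X) σ' b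
        = (B.factorial : ℝ) • ((B.factorial : ℝ)⁻¹ •
            ∑ σ' : Equiv.Perm (Fin B), prodBefore (α / B) (Wb X) σ' b) := by
          rw [smul_smul, mul_inv_cancel₀ hfac, one_smul]
      _ = (B.factorial : ℝ) • Pmat := by rw [h]
  have hPmatT : Pmatᵀ = Pmat := by rw [hPmat]; exact Dg_transpose V πf
  have hNsum : ∀ b : Fin B, ∑ σ' : Equiv.Perm (Fin B), prodAfter (α / B) (Wb X) σ' b
      = (B.factorial : ℝ) • Pmat := by
    intro b
    rw [sum_prodAfter_eq (α / B) (Wb X) (fun c => Wb_transpose X c) b, hPB b,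
      Matrix.transpose_smul, hPmatT]
  have hsumWb : ∑ b : Fin B, Wb X b = ((B : ℝ) / ((B * m : ℕ) : ℝ)) • (Xᵀ * X) := by
    simp only [Wb]
    rw [← Finset.smul_sum, sum_batch_mul]
  have hM1 : (1 : Matrix (Fin p) (Fin p) ℝ) - α • (W * Pmat) = Mmat := by
    rw [hWspec, hPmat, Dg_mul V hVt, smul_Dg, one_sub_Dg V hVV, hMmat]
    congr 2
    funext i j
    by_cases hij : i = j
    · subst hij
      simp only [Matrix.diagonal_apply_eq, hπf, hμf]
      ring
    · simp only [Matrix.diagonal_apply_ne _ hij]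
  have hMsum : ∑ σ' : Equiv.Perm (Fin B), prodAll (α / B) (Wb X) σ'
      = (B.factorial : ℝ) • Mmat := by
    rw [sum_prodAll_eq (α / B) (Wb X)]
    have h1 : ∑ b : Fin B, Wb X b * ∑ σ' : Equiv.Perm (Fin B), prodBefore (α / B) (Wb X) σ' b
        = (B.factorial : ℝ) • ((∑ b : Fin B, Wb X b) * Pmat) := by
      rw [Finset.sum_congr rfl (fun b _ => by rw [hPB b, Matrix.mul_smul]),
        ← Finset.smul_sum, ← Finset.sum_mul]
    rw [h1, smul_comm (α / (B : ℝ)) ((B.factorial : ℝ)), ← smul_sub]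
    congr 1
    rw [hsumWb, Matrix.smul_mul, smul_smul]
    have hc1 : α / (B : ℝ) * ((B : ℝ) / ((B * m : ℕ) : ℝ))
        = α * (((B * m : ℕ) : ℝ))⁻¹ := by field_simp
    rw [hc1, ← smul_smul, ← Matrix.smul_mul, ← hW]
    exact hM1
  set c : ℝ := α / ((B * m : ℕ) : ℝ) with hcdef
  have hcα : (B : ℝ) * (α / B) / ((B * m : ℕ) : ℝ) = c := by
    rw [hcdef]
    have : (B : ℝ) * (α / B) = α := by field_simp
    rw [this]
  set Sk : Matrix (Fin p) (Fin p) ℝ := ∑ j ∈ Finset.range k, Mmat ^ j with hSkdef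
  set a : Fin p → ℝ := Mmat ^ k *ᵥ (β₀ - βstar) with hadef
  set N : Matrix (Fin p) (Fin B × Fin m) ℝ := c • (Sk * (Pmat * Xᵀ)) with hNdef
  have hclosed : ∀ ω, meanIter (α / B) X (X *ᵥ βstar + η ω) β₀ k - βstar
      = a + N *ᵥ η ω := by
    intro ω
    rw [meanIter_closed (α / B) X βstar (η ω) β₀ Pmat Mmat hMsum hNsum k, hcα, hNdef, hadef,
      hSkdef]
  have hfun : (fun ω => (meanIter (α / B) X (X *ᵥ βstar + η ω) β₀ k - βstar) ⬝ᵥ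
      (Sg *ᵥ (meanIter (α / B) X (X *ᵥ βstar + η ω) β₀ k - βstar)))
      = fun ω => (a + N *ᵥ η ω) ⬝ᵥ (Sg *ᵥ (a + N *ᵥ η ω)) :=
    funext fun ω => by rw [hclosed ω]
  rw [hfun, integral_quad μ η σ hint1 hint2 hmean hcov a N Sg]
  have hSgspec : Sg = V * Matrix.diagonal lam * Vᵀ := by
    have h1 : V * (Vᵀ * Sg * V) * Vᵀ = Sg := by
      calc V * (Vᵀ * Sg * V) * Vᵀ = V * Vᵀ * Sg * (V * Vᵀ) := by
            simp only [Matrix.mul_assoc]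
        _ = Sg := by rw [hVV, Matrix.one_mul, Matrix.mul_one]
    rw [← h1, hΛ]
  have hT1 : a ⬝ᵥ (Sg *ᵥ a)
      = ∑ i, lam i * (1 - α * lamh i * (1 - Polynomial.eval (lamh i) q)) ^ (2 * k) *
          ((Vᵀ *ᵥ (β₀ - βstar)) i) ^ 2 := by
    rw [hadef, dot_mulVec_left, Matrix.mulVec_mulVec, Matrix.mulVec_mulVec]
    have hmat : (Mmat ^ k)ᵀ * Sg * Mmat ^ k
        = V * Matrix.diagonal (fun i => μf i ^ k * lam i * μf i ^ k) * Vᵀ := by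
      rw [hMmat, pow_Dg V hVV hVt, Dg_transpose, hSgspec, Dg_mul V hVt, Dg_mul V hVt]
    rw [hmat, dot_conj, diag_dot]
    refine Finset.sum_congr rfl fun i _ => ?_
    simp only [hμf]
    rw [pow_mul']
    ring
  have hT2 : σ ^ 2 * ∑ r, (Nᵀ * Sg * N) r r
      = σ ^ 2 / ((B * m : ℕ) : ℝ) * ∑ i, lam i / lamh i *
          (1 - (1 - α * lamh i * (1 - Polynomial.eval (lamh i) q)) ^ k) ^ 2 := by
    have hSkSpec : Sk * Pmat = V * Matrix.diagonal
        (fun i => (∑ j ∈ Finset.range k, μf i ^ j) * πf i) * Vᵀ := by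
      rw [hSkdef, hMmat, sum_pow_Dg V hVV hVt, hPmat, Dg_mul V hVt]
    have hN2 : N = c • ((Sk * Pmat) * Xᵀ) := by rw [hNdef, ← Matrix.mul_assoc]
    have hSkPT : (Sk * Pmat)ᵀ = Sk * Pmat := by
      rw [hSkSpec]; exact Dg_transpose V _
    have hNT : Nᵀ = c • (X * (Sk * Pmat)) := by
      rw [hN2, Matrix.transpose_smul, Matrix.transpose_mul, Matrix.transpose_transpose, hSkPT]
    have hQ : Nᵀ * Sg * N = (c * c) • (X * ((Sk * Pmat) * Sg * (Sk * Pmat)) * Xᵀ) := by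
      rw [hNT, hN2, Matrix.smul_mul, Matrix.smul_mul, Matrix.mul_smul, smul_smul]
      congr 1
      simp only [Matrix.mul_assoc]
    have hmid : (Sk * Pmat) * Sg * (Sk * Pmat)
        = V * Matrix.diagonal (fun i =>
            (∑ j ∈ Finset.range k, μf i ^ j) * πf i * lam i *
              ((∑ j ∈ Finset.range k, μf i ^ j) * πf i)) * Vᵀ := by
      rw [hSkSpec, hSgspec, Dg_mul V hVt, Dg_mul V hVt]
    have hXtX2 : Xᵀ * X = ((B * m : ℕ) : ℝ) • (V * Matrix.diagonal lamh * Vᵀ) := by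
      have hStS : Sᵀ * S = ((B * m : ℕ) : ℝ) • Matrix.diagonal lamh := by
        rw [← hlam, smul_smul, mul_inv_cancel₀ hnR, one_smul]
      rw [hXtX, hStS, Matrix.mul_smul, Matrix.smul_mul]
    have htr : ∑ r, (Nᵀ * Sg * N) r r
        = (c * c) * (((B * m : ℕ) : ℝ) *
            ∑ i, (∑ j ∈ Finset.range k, μf i ^ j) * πf i * lam i *
              ((∑ j ∈ Finset.range k, μf i ^ j) * πf i) * lamh i) := by
      rw [hQ, smul_diag_sum, trace_XRXt, hXtX2, Matrix.mul_smul, smul_diag_sum, hmid,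
        Dg_mul V hVt, trace_conj V hVt]
    rw [htr]
    have hfold : σ ^ 2 * ((c * c) * (((B * m : ℕ) : ℝ) *
        ∑ i, (∑ j ∈ Finset.range k, μf i ^ j) * πf i * lam i *
          ((∑ j ∈ Finset.range k, μf i ^ j) * πf i) * lamh i))
        = ∑ i, σ ^ 2 * c * c * ((B * m : ℕ) : ℝ) *
            ((∑ j ∈ Finset.range k, μf i ^ j) * πf i * lam i *
              ((∑ j ∈ Finset.range k, μf i ^ j) * πf i) * lamh i) := by
      rw [Finset.mul_sum, Finset.mul_sum, Finset.mul_sum]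
      refine Finset.sum_congr rfl fun i _ => ?_
      ring
    rw [hfold, Finset.mul_sum]
    refine Finset.sum_congr rfl fun i _ => ?_
    simp only [hμf, hπf, hcdef]
    have hgeo : (∑ j ∈ Finset.range k,
          (1 - α * lamh i * (1 - Polynomial.eval (lamh i) q)) ^ j) *
            (α * lamh i * (1 - Polynomial.eval (lamh i) q))
        = 1 - (1 - α * lamh i * (1 - Polynomial.eval (lamh i) q)) ^ k := by
      have h := geom_sum_mul (1 - α * lamh i * (1 - Polynomial.eval (lamh i) q)) k
      have h1 : (1 - α * lamh i * (1 - Polynomial.eval (lamh i) q)) - 1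
          = -(α * lamh i * (1 - Polynomial.eval (lamh i) q)) := by ring
      rw [h1, mul_neg] at h
      linarith
    rw [← hgeo]
    have hl : lamh i ≠ 0 := ne_of_gt (hlampos i)
    field_simp
  rw [hT1, hT2]
end
end

section
/- (Matrix geometric series via pseudoinverse.) Let A ∈ ℝ^{p×p} be symmetric, and let P := (I − A)(I − A)† and P_0 := I − P be the orthogonal projectors onto the range and nullspace of I − A, respectively. Then for every k ≥ 1, I + A + A² + ⋯ + A^{k−1} = (I − A^k)(I − A)† + k·P_0. -/
open Matrix Finset

/-- `Ad` is the Moore–Penrose pseudoinverse of `A`. -/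
def IsMoorePenrose {n₁ n₂ : Type*} [Fintype n₁] [Fintype n₂]
    (A : Matrix n₁ n₂ ℝ) (Ad : Matrix n₂ n₁ ℝ) : Prop :=
  A * Ad * A = A ∧ Ad * A * Ad = Ad ∧ (A * Ad)ᵀ = A * Ad ∧ (Ad * A)ᵀ = Ad * A

/-- Lemma `geometric_series_pinv`. Let `A ∈ ℝ^{p×p}` be symmetric, and let
`P := (I − A)(I − A)†` and `P₀ := I − P` be the orthogonal projectors onto the range and
nullspace of `I − A`. Then for every `k ≥ 1`,
`I + A + A² + ⋯ + A^{k−1} = (I − A^k)(I − A)† + k·P₀`. -/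
theorem geometric_series_pinv {p : ℕ} (A : Matrix (Fin p) (Fin p) ℝ) (hA : Aᵀ = A)
    (Ad : Matrix (Fin p) (Fin p) ℝ) (hAd : IsMoorePenrose (1 - A) Ad) :
    ∀ k : ℕ, 1 ≤ k →
      (∑ i ∈ Finset.range k, A ^ i) =
        (1 - A ^ k) * Ad + (k : ℝ) • (1 - (1 - A) * Ad) := by
  set B : Matrix (Fin p) (Fin p) ℝ := 1 - A with hB
  obtain ⟨h1, h2, h3, h4⟩ := hAd
  have hBt : Bᵀ = B := by rw [hB, transpose_sub, transpose_one, hA]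
  have hkey : B * (B * Ad) = B := by
    calc B * (B * Ad) = (B * Ad * B)ᵀ := by rw [transpose_mul, hBt, h3]
      _ = Bᵀ := by rw [h1]
      _ = B := hBt
  have hstep : ∀ k : ℕ, A ^ k = (A ^ k - A ^ (k+1)) * Ad + (1 - B * Ad) := by
    intro k
    have hCA : Commute A (∑ i ∈ Finset.range k, A ^ i) :=
      Commute.sum_right _ _ _ fun i _ => (Commute.refl A).pow_right i
    have hCB : (∑ i ∈ Finset.range k, A ^ i) * B = B * ∑ i ∈ Finset.range k, A ^ i := by
      rw [hB, mul_sub, sub_mul, mul_one, one_mul, hCA.eq]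
    have hgeom : B * (∑ i ∈ Finset.range k, A ^ i) = 1 - A ^ k := by
      have h := geom_sum_mul A k
      calc B * (∑ i ∈ Finset.range k, A ^ i)
          = (∑ i ∈ Finset.range k, A ^ i) * B := hCB.symm
        _ = -((∑ i ∈ Finset.range k, A ^ i) * (A - 1)) := by rw [hB]; noncomm_ring
        _ = 1 - A ^ k := by rw [h]; abel
    have hmain : (1 - A ^ k) * (B * Ad) = 1 - A ^ k := by
      calc (1 - A ^ k) * (B * Ad)
          = (B * (∑ i ∈ Finset.range k, A ^ i)) * (B * Ad) := by rw [hgeom]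
        _ = (∑ i ∈ Finset.range k, A ^ i) * (B * (B * Ad)) := by
            rw [← hCB]; noncomm_ring
        _ = (∑ i ∈ Finset.range k, A ^ i) * B := by rw [hkey]
        _ = 1 - A ^ k := by rw [hCB, hgeom]
    have e1 : A ^ k - A ^ (k+1) = A ^ k * B := by
      rw [hB, pow_succ, mul_sub, mul_one]
    rw [e1, mul_assoc]
    rw [sub_mul, one_mul] at hmain
    have h5 : A ^ k * (B * Ad) = B * Ad - (1 - A ^ k) := by
      rw [eq_sub_iff_add_eq, ← hmain]; abel
    rw [h5]; abel
  intro k hk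
  induction k with
  | zero => omega
  | succ n ih =>
    rcases Nat.eq_zero_or_pos n with hn | hn
    · subst hn
      simp only [zero_add, Finset.sum_range_one, pow_zero, pow_one, Nat.cast_one, one_smul]
      abel
    · rw [Finset.sum_range_succ, ih hn]
      push_cast
      calc (1 - A ^ n) * Ad + (n : ℝ) • (1 - B * Ad) + A ^ n
          = (1 - A ^ n) * Ad + (n : ℝ) • (1 - B * Ad) +
              ((A ^ n - A ^ (n+1)) * Ad + (1 - B * Ad)) := by rw [← hstep n]
        _ = ((1 - A ^ n) * Ad + (A ^ n - A ^ (n+1)) * Ad) +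
              ((n : ℝ) • (1 - B * Ad) + (1 - B * Ad)) := by abel
        _ = (1 - A ^ (n+1)) * Ad + ((n : ℝ) • (1 - B * Ad) + (1 - B * Ad)) := by
            rw [← add_mul, sub_add_sub_cancel]
        _ = (1 - A ^ (n+1)) * Ad + ((n : ℝ) + 1) • (1 - B * Ad) := by
            rw [add_smul, one_smul]
end

section
/- (Two representations of the batch-modification matrix.) Let W_1, …, W_B be arbitrary square matrices of the same size and α a scalar. Then for every b ∈ {1,…,B}, (1/B!)∑_{τ∈S_B} ∏_{j<τ⁻¹(b)}(I − αW_{τ(j)}) = (1/B!)∑_{τ∈S_B} ∏_{j>τ⁻¹(b)}(I − αW_{τ(j)}), where in each product the factors are ordered by decreasing index j (the factor with largest j leftmost) and the empty product is I; i.e. the averaged product over the batches preceding b equals the averaged product over the batches following b. -/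
open Matrix Finset

noncomputable section

namespace BeforeAfterAux

lemma filt_lt {B : ℕ} (t : Fin B) :
    (List.finRange B).filter (fun j => j < t) = (List.finRange B).take t.val := by
  conv_lhs => rw [← List.take_append_drop t.val (List.finRange B), List.filter_append]
  have h1 : ((List.finRange B).take t.val).filter (fun j => j < t) = (List.finRange B).take t.val := by
    rw [List.filter_eq_self]
    intro a ha
    rw [List.mem_take_iff_getElem] at ha
    obtain ⟨i, hi, rfl⟩ := ha
    simp [Fin.lt_def]; omega
  have h2 : ((List.finRange B).drop t.val).filter (fun j => j < t) = [] := by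
    rw [List.filter_eq_nil_iff]
    intro a ha
    rw [List.mem_drop_iff_getElem] at ha
    obtain ⟨i, hi, rfl⟩ := ha
    simp [Fin.lt_def]
  rw [h1, h2, List.append_nil]

lemma filt_gt {B : ℕ} (t : Fin B) :
    (List.finRange B).filter (fun j => t < j) = (List.finRange B).drop (t.val + 1) := by
  conv_lhs => rw [← List.take_append_drop (t.val + 1) (List.finRange B), List.filter_append]
  have h1 : ((List.finRange B).take (t.val + 1)).filter (fun j => t < j) = [] := by
    rw [List.filter_eq_nil_iff]
    intro a ha
    rw [List.mem_take_iff_getElem] at ha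
    obtain ⟨i, hi, rfl⟩ := ha
    simp [Fin.lt_def]; omega
  have h2 : ((List.finRange B).drop (t.val + 1)).filter (fun j => t < j)
      = (List.finRange B).drop (t.val + 1) := by
    rw [List.filter_eq_self]
    intro a ha
    rw [List.mem_drop_iff_getElem] at ha
    obtain ⟨i, hi, rfl⟩ := ha
    simp [Fin.lt_def]; omega
  rw [h1, h2, List.nil_append]

def rhoFun {B : ℕ} (t : Fin B) (j : Fin B) : Fin B :=
  if h : B - t.val ≤ j.val then ⟨j.val + t.val - B, by omega⟩
  else if h2 : j.val = B - 1 - t.val then t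
  else ⟨j.val + t.val + 1, by have := j.isLt; have := t.isLt; omega⟩

lemma rhoFun_inj {B : ℕ} (t : Fin B) : Function.Injective (rhoFun t) := by
  intro j1 j2 h
  unfold rhoFun at h
  have := j1.isLt; have := j2.isLt; have := t.isLt
  split_ifs at h <;>
    (apply_fun Fin.val at h; simp only [Fin.val_mk] at h; apply Fin.ext; omega)

noncomputable def rho {B : ℕ} (t : Fin B) : Equiv.Perm (Fin B) :=
  Equiv.ofBijective (rhoFun t) ((Finite.injective_iff_bijective).mp (rhoFun_inj t))

lemma rho_apply {B : ℕ} (t : Fin B) (j : Fin B) : rho t j = rhoFun t j := rfl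

lemma rho_apply_ge {B : ℕ} (t : Fin B) (x y : Fin B) (h : x.val + t.val = B + y.val) :
    rho t x = y := by
  rw [rho_apply]
  unfold rhoFun
  rw [dif_pos (by omega)]
  apply Fin.ext
  simp; omega

lemma rho_rev {B : ℕ} (t : Fin B) : rho t (Fin.rev t) = t := by
  rw [rho_apply]
  unfold rhoFun
  have := t.isLt
  rw [dif_neg (by simp [Fin.rev]; omega), dif_pos (by simp [Fin.rev]; omega)]

lemma rho_symm_apply {B : ℕ} (t : Fin B) : (rho t).symm t = Fin.rev t :=
  (Equiv.symm_apply_eq _).mpr (rho_rev t).symm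

noncomputable def Phi {B : ℕ} (b : Fin B) (τ : Equiv.Perm (Fin B)) : Equiv.Perm (Fin B) :=
  (rho (τ.symm b)).trans τ

lemma Phi_symm_apply {B : ℕ} (b : Fin B) (τ : Equiv.Perm (Fin B)) :
    (Phi b τ).symm b = Fin.rev (τ.symm b) := by
  simp [Phi, rho_symm_apply]

lemma Phi_injective {B : ℕ} (b : Fin B) : Function.Injective (Phi b) := by
  intro τ1 τ2 h
  have ht : τ1.symm b = τ2.symm b := by
    have := congrArg (fun e : Equiv.Perm (Fin B) => e.symm b) h
    simp only [Phi_symm_apply] at this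
    exact Fin.rev_injective this
  have h' : τ1 * rho (τ1.symm b) = τ2 * rho (τ2.symm b) := h
  rw [ht] at h'
  exact mul_right_cancel h'

end BeforeAfterAux

namespace BeforeAfterAux
open MiniBatchGD

lemma before_eq_after_phi {p B : ℕ} (α : ℝ) (W : Fin B → Matrix (Fin p) (Fin p) ℝ)
    (b : Fin B) (τ : Equiv.Perm (Fin B)) :
    prodBefore α W τ b = prodAfter α W (Phi b τ) b := by
  have hs : (Phi b τ).symm b = Fin.rev (τ.symm b) := Phi_symm_apply b τ
  have htB := (τ.symm b).isLt
  unfold prodBefore prodAfter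
  rw [hs, filt_lt, filt_gt]
  congr 1
  apply List.ext_getElem
  · simp [Fin.rev]
    omega
  · intro i h1 h2
    simp only [List.getElem_map, List.getElem_reverse, List.getElem_take,
      List.getElem_drop, List.length_map, List.length_reverse, List.length_take,
      List.length_drop, List.length_finRange, List.getElem_finRange, Fin.val_rev]
    refine congrArg (fun z => (1 : Matrix (Fin p) (Fin p) ℝ) - α • W z) ?_
    show τ _ = (Phi b τ) _
    simp only [Phi, Equiv.trans_apply]
    refine (congrArg τ ?_).symm
    apply rho_apply_ge
    simp only [List.length_map, List.length_reverse, List.length_take,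
      List.length_finRange] at h1
    simp
    omega

end BeforeAfterAux

open MiniBatchGD

/-- Two representations of the batch-modification matrix, equations
`eq:app_modified_batches1` / `eq:app_modified_batches2`. For arbitrary square matrices
`W_1, …, W_B` and a scalar `α`, for every `b`,
`(1/B!)∑_{τ∈S_B} ∏_{j<τ⁻¹(b)}(I − αW_{τ(j)}) = (1/B!)∑_{τ∈S_B} ∏_{j>τ⁻¹(b)}(I − αW_{τ(j)})`,
with factors in each product ordered by decreasing position `j`. -/
theorem before_eq_after {p B : ℕ} (hB : 1 ≤ B) (α : ℝ)
    (W : Fin B → Matrix (Fin p) (Fin p) ℝ) :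
    ∀ b : Fin B,
      ((B.factorial : ℝ))⁻¹ • ∑ τ : Equiv.Perm (Fin B), prodBefore α W τ b =
        ((B.factorial : ℝ))⁻¹ • ∑ τ : Equiv.Perm (Fin B), prodAfter α W τ b := by
  intro b
  congr 1
  exact Fintype.sum_bijective (BeforeAfterAux.Phi b)
    ((Finite.injective_iff_bijective).mp (BeforeAfterAux.Phi_injective b)) _ _
    (fun τ => BeforeAfterAux.before_eq_after_phi α W b τ)
end
end

section
/- (Commutation identity underlying the symmetry of Z.) Let W_1, …, W_B be arbitrary square matrices of the same size and α a scalar, and for each b set Π_b := (1/B!)∑_{τ∈S_B} ∏_{j>τ⁻¹(b)}(I − αW_{τ(j)}), with factors in each product ordered by decreasing index j and empty product equal to I. Then ∑_{b=1}^B Π_bW_b = ∑_{b=1}^B W_bΠ_b. -/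
open Matrix Finset

noncomputable section

open MiniBatchGD


namespace CommHelper

open MiniBatchGD

/-! ### Arithmetic facts about filtered `List.range` -/

lemma filter_lt_range : ∀ (B k : ℕ), k ≤ B →
    (List.range B).filter (fun j => j < k) = List.range k := by
  intro B
  induction B with
  | zero => intro k hk; interval_cases k; simp
  | succ n ih =>
    intro k hk
    rcases Nat.lt_or_ge k (n+1) with h1 | h1
    · have hk' : k ≤ n := by omega
      rw [List.range_succ, List.filter_append, ih k hk']
      have : (List.filter (fun j => decide (j < k)) [n]) = [] := by
        simp; omega
      rw [this, List.append_nil]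
    · have : k = n + 1 := by omega
      subst this
      apply List.filter_eq_self.mpr
      intro a ha
      simp only [List.mem_range] at ha
      simpa using ha

lemma filter_le_cons : ∀ (B k : ℕ), k < B →
    (List.range B).filter (fun j => k ≤ j)
      = k :: (List.range B).filter (fun j => k + 1 ≤ j) := by
  intro B
  induction B with
  | zero => intro k hk; omega
  | succ n ih =>
    intro k hk
    rcases Nat.lt_or_ge k n with h1 | h1
    · rw [List.range_succ, List.filter_append, List.filter_append, ih k h1]
      have e1 : (List.filter (fun j => decide (k ≤ j)) [n]) = [n] := by simp; omega
      have e2 : (List.filter (fun j => decide (k + 1 ≤ j)) [n]) = [n] := by simp; omega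
      rw [e1, e2]
      simp
    · have : k = n := by omega
      subst this
      rw [List.range_succ, List.filter_append, List.filter_append]
      have e0 : (List.range k).filter (fun j => decide (k ≤ j)) = [] := by
        apply List.filter_eq_nil_iff.mpr
        intro a ha
        simp only [List.mem_range] at ha
        simpa using ha
      have e0' : (List.range k).filter (fun j => decide (k + 1 ≤ j)) = [] := by
        apply List.filter_eq_nil_iff.mpr
        intro a ha
        simp only [List.mem_range] at ha
        simp; omega
      have e1 : (List.filter (fun j => decide (k ≤ j)) [k]) = [k] := by simp
      have e2 : (List.filter (fun j => decide (k + 1 ≤ j)) [k]) = [] := by simp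
      rw [e0, e0', e1, e2]
      simp

lemma filter_le_top (B : ℕ) :
    (List.range B).filter (fun j => B ≤ j) = [] := by
  apply List.filter_eq_nil_iff.mpr
  intro a ha
  simp only [List.mem_range] at ha
  simpa using ha

lemma reverse_range (k : ℕ) :
    (List.range k).reverse = (List.range k).map (fun n => k - 1 - n) := by
  rw [List.range_eq_range', List.reverse_range']
  simp [List.range_eq_range']

/-! ### Telescoping sums in a (noncommutative) ring -/

/-- telescoping, "after"-products multiplied by `(1 - h k)` on the right. -/
lemma sum_after {R : Type*} [Ring R] (B : ℕ) (h : ℕ → R) :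
    ∑ k ∈ Finset.range B,
        ((((List.range B).filter (fun j => k + 1 ≤ j)).reverse.map h).prod * (1 - h k))
      = 1 - (((List.range B).reverse.map h).prod) := by
  set P : ℕ → R := fun k => (((List.range B).filter (fun j => k ≤ j)).reverse.map h).prod with hP
  have step : ∀ k ∈ Finset.range B,
      (((List.range B).filter (fun j => k + 1 ≤ j)).reverse.map h).prod * (1 - h k)
        = P (k+1) - P k := by
    intro k hk
    rw [Finset.mem_range] at hk
    have hPk : P k = P (k+1) * h k := by
      rw [hP]
      dsimp only
      rw [filter_le_cons B k hk, List.reverse_cons, List.map_append, List.prod_append]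
      simp
    rw [hPk]
    show P (k+1) * (1 - h k) = _
    rw [mul_one_sub]
  rw [Finset.sum_congr rfl step, Finset.sum_range_sub P B]
  have h1 : P B = 1 := by
    rw [hP]; dsimp only; rw [filter_le_top]; simp
  have hfil : (List.range B).filter (fun j => 0 ≤ j) = List.range B := by
    apply List.filter_eq_self.mpr
    intro a _; simp
  have h0 : P 0 = ((List.range B).reverse.map h).prod := by
    rw [hP]; dsimp only; rw [hfil]
  rw [h1, h0]

/-- telescoping, "before"-products multiplied by `(1 - h k)` on the left. -/
lemma sum_before {R : Type*} [Ring R] (B : ℕ) (h : ℕ → R) :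
    ∑ k ∈ Finset.range B,
        ((1 - h k) * (((List.range B).filter (fun j => j < k)).reverse.map h).prod)
      = 1 - (((List.range B).reverse.map h).prod) := by
  set Q : ℕ → R := fun k => (((List.range B).filter (fun j => j < k)).reverse.map h).prod with hQ
  have step : ∀ k ∈ Finset.range B,
      (1 - h k) * (((List.range B).filter (fun j => j < k)).reverse.map h).prod
        = Q k - Q (k+1) := by
    intro k hk
    rw [Finset.mem_range] at hk
    have : Q (k+1) = h k * Q k := by
      rw [hQ]
      dsimp only
      rw [filter_lt_range B (k+1) hk, List.range_succ, List.reverse_append,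
        filter_lt_range B k (le_of_lt hk)]
      simp
    rw [this]
    show (1 - h k) * Q k = _
    rw [one_sub_mul]
  rw [Finset.sum_congr rfl step, Finset.sum_range_sub' Q B]
  have h1 : Q B = ((List.range B).reverse.map h).prod := by
    rw [hQ]; dsimp only; rw [filter_lt_range B B le_rfl]
  have h0 : Q 0 = 1 := by
    rw [hQ]; dsimp only; rw [filter_lt_range B 0 (Nat.zero_le B)]; simp
  rw [h0, h1]

/-! ### Transfer between `finRange` and `range` -/

/-- transfer a product over a filtered `finRange` to a product over a filtered `range`. -/
lemma prod_transfer {R : Type*} [Ring R] {B : ℕ} (g : Fin B → R) (h : ℕ → R)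
    (hg : ∀ j : Fin B, h j.val = g j) (pF : Fin B → Bool) (pN : ℕ → Bool)
    (hp : ∀ j : Fin B, pF j = pN j.val) :
    (((List.finRange B).filter pF).reverse.map g).prod
      = (((List.range B).filter pN).reverse.map h).prod := by
  rw [← List.map_coe_finRange_eq_range, List.filter_map]
  have e1 : List.filter (pN ∘ Fin.val) (List.finRange B)
      = List.filter pF (List.finRange B) :=
    List.filter_congr fun j _ => (hp j).symm
  rw [e1, ← List.map_reverse, List.map_map]
  exact congrArg List.prod (List.map_congr_left fun j _ => (hg j).symm)

lemma prod_transfer_all {R : Type*} [Ring R] {B : ℕ} (g : Fin B → R) (h : ℕ → R)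
    (hg : ∀ j : Fin B, h j.val = g j) :
    ((List.finRange B).reverse.map g).prod = ((List.range B).reverse.map h).prod := by
  rw [← List.map_coe_finRange_eq_range, ← List.map_reverse, List.map_map]
  exact congrArg List.prod (List.map_congr_left fun j _ => (hg j).symm)

lemma map_val_filter {B : ℕ} (pF : Fin B → Bool) (pN : ℕ → Bool)
    (hp : ∀ j : Fin B, pF j = pN j.val) :
    ((List.finRange B).filter pF).map Fin.val = (List.range B).filter pN := by
  rw [← List.map_coe_finRange_eq_range, List.filter_map]
  exact congrArg (List.map Fin.val) (List.filter_congr fun j _ => hp j)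

/-- `finRange` reversed is `finRange` mapped through `Fin.rev`. -/
lemma finRange_reverse_eq (B : ℕ) :
    (List.finRange B).reverse = (List.finRange B).map Fin.rev := by
  apply List.map_injective_iff.mpr Fin.val_injective
  rw [List.map_reverse, List.map_coe_finRange_eq_range, List.map_map, reverse_range]
  rw [← List.map_coe_finRange_eq_range (n := B), List.map_map]
  apply List.map_congr_left
  intro j _
  simp only [Function.comp_apply, Fin.val_rev]
  omega

variable {p B : ℕ}

/-! ### Telescoping identities for the epoch products -/

/-- Telescoping identity, left version. -/
lemma telescope_after (α : ℝ) (W : Fin B → Matrix (Fin p) (Fin p) ℝ)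
    (τ : Equiv.Perm (Fin B)) :
    ∑ b : Fin B, prodAfter α W τ b * (α • W b) = 1 - prodAll α W τ := by
  classical
  set g : Fin B → Matrix (Fin p) (Fin p) ℝ := fun j => 1 - α • W (τ j) with hgdef
  set h : ℕ → Matrix (Fin p) (Fin p) ℝ :=
    fun n => if hn : n < B then g ⟨n, hn⟩ else 1 with hhdef
  have hg : ∀ j : Fin B, h j.val = g j := fun j => by
    rw [hhdef]; exact dif_pos j.isLt
  rw [← Equiv.sum_comp τ (fun b => prodAfter α W τ b * (α • W b))]
  have key : ∀ i : Fin B,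
      prodAfter α W τ (τ i) * (α • W (τ i))
        = (((List.range B).filter (fun j => i.val + 1 ≤ j)).reverse.map h).prod
            * (1 - h i.val) := by
    intro i
    have e1 : prodAfter α W τ (τ i)
        = (((List.range B).filter (fun j => i.val + 1 ≤ j)).reverse.map h).prod := by
      unfold prodAfter
      simp only [Equiv.symm_apply_apply]
      exact prod_transfer g h hg _ _ (fun j => by
        rw [decide_eq_decide, Fin.lt_def]; exact Nat.lt_iff_add_one_le)
    have e2 : α • W (τ i) = 1 - h i.val := by
      rw [hg i, hgdef]; simp
    rw [e1, e2]
  rw [Finset.sum_congr rfl (fun i _ => key i)]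
  rw [Fin.sum_univ_eq_sum_range
    (fun k => (((List.range B).filter (fun j => k + 1 ≤ j)).reverse.map h).prod * (1 - h k)) B]
  rw [sum_after B h]
  congr 1
  unfold prodAll
  exact (prod_transfer_all g h hg).symm

/-- Telescoping identity, right version. -/
lemma telescope_before (α : ℝ) (W : Fin B → Matrix (Fin p) (Fin p) ℝ)
    (τ : Equiv.Perm (Fin B)) :
    ∑ b : Fin B, (α • W b) * prodBefore α W τ b = 1 - prodAll α W τ := by
  classical
  set g : Fin B → Matrix (Fin p) (Fin p) ℝ := fun j => 1 - α • W (τ j) with hgdef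
  set h : ℕ → Matrix (Fin p) (Fin p) ℝ :=
    fun n => if hn : n < B then g ⟨n, hn⟩ else 1 with hhdef
  have hg : ∀ j : Fin B, h j.val = g j := fun j => by
    rw [hhdef]; exact dif_pos j.isLt
  rw [← Equiv.sum_comp τ (fun b => (α • W b) * prodBefore α W τ b)]
  have key : ∀ i : Fin B,
      (α • W (τ i)) * prodBefore α W τ (τ i)
        = (1 - h i.val)
            * (((List.range B).filter (fun j => j < i.val)).reverse.map h).prod := by
    intro i
    have e1 : prodBefore α W τ (τ i)
        = (((List.range B).filter (fun j => j < i.val)).reverse.map h).prod := by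
      unfold prodBefore
      simp only [Equiv.symm_apply_apply]
      exact prod_transfer g h hg _ _ (fun j => by
        rw [decide_eq_decide]; exact Fin.lt_def)
    have e2 : α • W (τ i) = 1 - h i.val := by
      rw [hg i, hgdef]; simp
    rw [e1, e2]
  rw [Finset.sum_congr rfl (fun i _ => key i)]
  rw [Fin.sum_univ_eq_sum_range
    (fun k => (1 - h k) * (((List.range B).filter (fun j => j < k)).reverse.map h).prod) B]
  rw [sum_before B h]
  congr 1
  unfold prodAll
  exact (prod_transfer_all g h hg).symm

/-! ### The bijection exchanging "after" and "before" products -/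

/-- increasing-order "before" product -/
def prodBeforeInc (α : ℝ) (W : Fin B → Matrix (Fin p) (Fin p) ℝ)
    (σ : Equiv.Perm (Fin B)) (b : Fin B) : Matrix (Fin p) (Fin p) ℝ :=
  (((List.finRange B).filter (fun j => j < σ.symm b)).map
      (fun j => (1 : Matrix (Fin p) (Fin p) ℝ) - α • W (σ j))).prod

lemma prodAfter_eq_inc (α : ℝ) (W : Fin B → Matrix (Fin p) (Fin p) ℝ)
    (τ : Equiv.Perm (Fin B)) (b : Fin B) :
    prodAfter α W τ b = prodBeforeInc α W (τ * Fin.revPerm) b := by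
  have hsymm : (τ * Fin.revPerm).symm b = (τ.symm b).rev := by
    rw [Equiv.symm_apply_eq]
    simp [Equiv.Perm.mul_apply]
  unfold prodAfter prodBeforeInc
  rw [hsymm]
  set c := τ.symm b with hc
  have hlist : List.map Fin.rev ((List.finRange B).filter (fun j => j < c.rev))
      = ((List.finRange B).filter (fun j => c < j)).reverse := by
    rw [← List.filter_reverse, finRange_reverse_eq, List.filter_map]
    refine congrArg (List.map Fin.rev) ?_
    refine List.filter_congr fun j _ => ?_
    show decide (j < c.rev) = decide (c < j.rev)
    rw [decide_eq_decide]
    exact Fin.lt_rev_iff.symm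
  refine congrArg List.prod ?_
  conv_lhs => rw [← hlist]
  rw [List.map_map]
  rfl

/-- the permutation of `Fin B` reversing the positions `0, …, c-1`. -/
def revBelowFun (c : Fin B) (j : Fin B) : Fin B :=
  if h : j < c then ⟨c.val - 1 - j.val, by have := c.isLt; omega⟩ else j

lemma revBelowFun_val_of_lt {c j : Fin B} (h : j < c) :
    (revBelowFun c j).val = c.val - 1 - j.val := by
  rw [revBelowFun, dif_pos h]

lemma revBelowFun_of_not_lt {c j : Fin B} (h : ¬ j < c) : revBelowFun c j = j :=
  dif_neg h

lemma revBelowFun_lt {c j : Fin B} (h : j < c) : revBelowFun c j < c := by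
  rw [Fin.lt_def, revBelowFun_val_of_lt h]
  have := Fin.lt_def.mp h
  omega

lemma revBelowFun_involutive (c : Fin B) : Function.Involutive (revBelowFun c) := by
  intro j
  by_cases h : j < c
  · have h2 := revBelowFun_lt h
    apply Fin.ext
    rw [revBelowFun_val_of_lt h2, revBelowFun_val_of_lt h]
    have := Fin.lt_def.mp h
    omega
  · rw [revBelowFun_of_not_lt h, revBelowFun_of_not_lt h]

def revBelow (c : Fin B) : Equiv.Perm (Fin B) :=
  Function.Involutive.toPerm _ (revBelowFun_involutive c)

lemma revBelow_apply (c j : Fin B) : revBelow c j = revBelowFun c j := rfl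

lemma revBelow_mul_self (c : Fin B) : revBelow c * revBelow c = 1 :=
  Equiv.ext fun j => revBelowFun_involutive c j

/-- reversing the positions below `c` turns the reversed filtered list back. -/
lemma map_revBelow (c : Fin B) :
    List.map (revBelow c) (((List.finRange B).filter (fun j => j < c)).reverse)
      = (List.finRange B).filter (fun j => j < c) := by
  set L := (List.finRange B).filter (fun j => j < c) with hL
  have hval : L.map Fin.val = List.range c.val := by
    have h1 : L.map Fin.val = (List.range B).filter (fun n => n < c.val) :=
      map_val_filter _ _ (fun j => by
        show decide (j < c) = decide (j.val < c.val)
        rw [decide_eq_decide]; exact Fin.lt_def)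
    rw [h1]
    exact filter_lt_range B c.val c.isLt.le
  apply List.map_injective_iff.mpr Fin.val_injective
  have hmem : ∀ j ∈ L.reverse, (Fin.val ∘ (revBelow c)) j = c.val - 1 - j.val := by
    intro j hj
    rw [List.mem_reverse, hL, List.mem_filter] at hj
    have := of_decide_eq_true hj.2
    exact revBelowFun_val_of_lt this
  rw [List.map_map, List.map_congr_left hmem]
  have : (fun j : Fin B => c.val - 1 - j.val) = (fun n => c.val - 1 - n) ∘ Fin.val := rfl
  rw [this, ← List.map_map, List.map_reverse, hval, reverse_range, List.map_map]
  have h2 : List.map ((fun n => c.val - 1 - n) ∘ (fun n => c.val - 1 - n)) (List.range c.val)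
      = List.map id (List.range c.val) := by
    apply List.map_congr_left
    intro n hn
    rw [List.mem_range] at hn
    simp only [Function.comp_apply, id]
    omega
  rw [h2, List.map_id]

lemma prodBefore_phi (α : ℝ) (W : Fin B → Matrix (Fin p) (Fin p) ℝ)
    (σ : Equiv.Perm (Fin B)) (b : Fin B) :
    prodBefore α W (σ * revBelow (σ.symm b)) b = prodBeforeInc α W σ b := by
  set c := σ.symm b with hc
  have hsymm : (σ * revBelow c).symm b = c := by
    rw [Equiv.symm_apply_eq, Equiv.Perm.mul_apply]
    have : revBelow c c = c := revBelowFun_of_not_lt (lt_irrefl c)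
    rw [this, hc, Equiv.apply_symm_apply]
  unfold prodBefore prodBeforeInc
  rw [hsymm, ← hc]
  refine congrArg List.prod ?_
  conv_rhs => rw [← map_revBelow c]
  rw [List.map_map]
  rfl

/-- key exchange lemma: summing over all permutations, the "after" products
equal the "before" products. -/
lemma sum_prodAfter_eq_sum_prodBefore (α : ℝ) (W : Fin B → Matrix (Fin p) (Fin p) ℝ)
    (b : Fin B) :
    ∑ τ : Equiv.Perm (Fin B), prodAfter α W τ b
      = ∑ τ : Equiv.Perm (Fin B), prodBefore α W τ b := by
  have step1 : ∑ τ : Equiv.Perm (Fin B), prodAfter α W τ b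
      = ∑ σ : Equiv.Perm (Fin B), prodBeforeInc α W σ b := by
    rw [← Equiv.sum_comp (Equiv.mulRight (Fin.revPerm : Equiv.Perm (Fin B)))
      (fun σ => prodBeforeInc α W σ b)]
    exact Finset.sum_congr rfl fun τ _ => prodAfter_eq_inc α W τ b
  rw [step1]
  have hinv : Function.Involutive (fun σ : Equiv.Perm (Fin B) => σ * revBelow (σ.symm b)) := by
    intro σ
    dsimp only
    have hsymm : (σ * revBelow (σ.symm b)).symm b = σ.symm b := by
      rw [Equiv.symm_apply_eq, Equiv.Perm.mul_apply]
      rw [revBelow_apply, revBelowFun_of_not_lt (lt_irrefl _), Equiv.apply_symm_apply]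
    rw [hsymm, mul_assoc, revBelow_mul_self, mul_one]
  exact Fintype.sum_bijective _ hinv.bijective _ _
    (fun σ => (prodBefore_phi α W σ b).symm)

end CommHelper

open CommHelper in

/-- Commutation identity underlying the symmetry of `Z`. With
`Π_b := (1/B!)∑_{τ∈S_B} ∏_{j>τ⁻¹(b)}(I − αW_{τ(j)})` (factors ordered by decreasing position),
one has `∑_{b=1}^B Π_b W_b = ∑_{b=1}^B W_b Π_b`. -/
theorem commutation_identity {p B : ℕ} (hB : 1 ≤ B) (α : ℝ)
    (W : Fin B → Matrix (Fin p) (Fin p) ℝ) :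
    ∑ b : Fin B,
        (((B.factorial : ℝ))⁻¹ • ∑ τ : Equiv.Perm (Fin B), prodAfter α W τ b) * W b =
      ∑ b : Fin B,
        W b * (((B.factorial : ℝ))⁻¹ • ∑ τ : Equiv.Perm (Fin B), prodAfter α W τ b) := by
    classical
  have key : ∑ b : Fin B, ∑ τ : Equiv.Perm (Fin B), prodAfter α W τ b * W b
      = ∑ b : Fin B, ∑ τ : Equiv.Perm (Fin B), W b * prodAfter α W τ b := by
    rcases eq_or_ne α 0 with rfl | hα
    · have h1 : ∀ (τ : Equiv.Perm (Fin B)) (b : Fin B),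
          prodAfter (0 : ℝ) W τ b = 1 := by
        intro τ b
        unfold prodAfter
        apply List.prod_eq_one
        intro x hx
        rw [List.mem_map] at hx
        obtain ⟨j, _, rfl⟩ := hx
        simp
      simp only [h1, one_mul, mul_one]
    · refine smul_right_injective (Matrix (Fin p) (Fin p) ℝ) hα ?_
      have l1 : α • ∑ b : Fin B, ∑ τ : Equiv.Perm (Fin B), prodAfter α W τ b * W b
          = ∑ τ : Equiv.Perm (Fin B), (1 - prodAll α W τ) := by
        rw [Finset.sum_comm, Finset.smul_sum]
        refine Finset.sum_congr rfl fun τ _ => ?_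
        rw [Finset.smul_sum]
        rw [Finset.sum_congr rfl
          (fun b _ => (mul_smul_comm α (prodAfter α W τ b) (W b)).symm)]
        exact telescope_after α W τ
      have l2 : α • ∑ b : Fin B, ∑ τ : Equiv.Perm (Fin B), W b * prodAfter α W τ b
          = ∑ τ : Equiv.Perm (Fin B), (1 - prodAll α W τ) := by
        have e : ∀ b : Fin B, ∑ τ : Equiv.Perm (Fin B), W b * prodAfter α W τ b
            = ∑ τ : Equiv.Perm (Fin B), W b * prodBefore α W τ b := by
          intro b
          rw [← Finset.mul_sum, ← Finset.mul_sum, sum_prodAfter_eq_sum_prodBefore]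
        rw [Finset.sum_congr rfl (fun b _ => e b)]
        rw [Finset.sum_comm, Finset.smul_sum]
        refine Finset.sum_congr rfl fun τ _ => ?_
        rw [Finset.smul_sum]
        rw [Finset.sum_congr rfl
          (fun b _ => (smul_mul_assoc α (W b) (prodBefore α W τ b)).symm)]
        exact telescope_before α W τ
      show α • _ = α • _
      rw [l1, l2]
  calc
    ∑ b : Fin B,
        (((B.factorial : ℝ))⁻¹ • ∑ τ : Equiv.Perm (Fin B), prodAfter α W τ b) * W b
      = ((B.factorial : ℝ))⁻¹ •
          ∑ b : Fin B, ∑ τ : Equiv.Perm (Fin B), prodAfter α W τ b * W b := by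
        rw [Finset.smul_sum]
        refine Finset.sum_congr rfl fun b _ => ?_
        rw [smul_mul_assoc, Finset.sum_mul]
    _ = ((B.factorial : ℝ))⁻¹ •
          ∑ b : Fin B, ∑ τ : Equiv.Perm (Fin B), W b * prodAfter α W τ b := by rw [key]
    _ = ∑ b : Fin B,
        W b * (((B.factorial : ℝ))⁻¹ • ∑ τ : Equiv.Perm (Fin B), prodAfter α W τ b) := by
        rw [Finset.smul_sum]
        refine Finset.sum_congr rfl fun b _ => ?_
        rw [mul_smul_comm, Finset.mul_sum]
end
end

section
/- (Loewner shrinkage bounds for the two-batch cross-covariance.) Let W_1, W_2 ∈ ℝ^{p×p} be symmetric positive semidefinite matrices and α ≥ 0 with α‖W_1 + W_2‖ ≤ 2 (spectral norm). Set Z := (1/2)(W_1 + W_2) − (1/4)α(W_2W_1 + W_1W_2) and Δ := (1/4)[((1/2)αW_1 − I)W_2W_1 + ((1/2)αW_2 − I)W_1W_2]. Then in the Loewner order, −(1/2)‖W_1 + W_2‖·Z ⪯ Δ ⪯ (1/2)‖W_1 + W_2‖·Z; moreover the upper bound holds with equality when W_1 = W_2 = cI and α = 2/c for some c > 0. -/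
open Matrix
open scoped Matrix.Norms.L2Operator

section Aux

variable {p : ℕ}

private lemma aux_smul_psd {c : ℝ} (hc : 0 ≤ c) {A : Matrix (Fin p) (Fin p) ℝ}
    (hA : A.PosSemidef) : (c • A).PosSemidef := by
  refine .of_dotProduct_mulVec_nonneg ?_ fun x => ?_
  · unfold Matrix.IsHermitian
    rw [conjTranspose_smul, hA.1]
    simp
  · rw [smul_mulVec, dotProduct_smul, smul_eq_mul]
    exact mul_nonneg hc (hA.dotProduct_mulVec_nonneg x)

/-- For a real matrix, `‖A‖ • 1 - A` is PSD when `A` is Hermitian (L2 operator norm). -/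
private lemma aux_norm_smul_one_sub {A : Matrix (Fin p) (Fin p) ℝ} (hA : A.IsHermitian) :
    (‖A‖ • (1 : Matrix (Fin p) (Fin p) ℝ) - A).PosSemidef := by
  refine .of_dotProduct_mulVec_nonneg ?_ fun x => ?_
  · unfold Matrix.IsHermitian
    rw [conjTranspose_sub, conjTranspose_smul, conjTranspose_one, hA.eq]
    simp
  · have hx : star x = x := by
      ext i; simp
    rw [sub_mulVec, dotProduct_sub, hx]
    have h1 : x ⬝ᵥ ((‖A‖ • (1 : Matrix (Fin p) (Fin p) ℝ)) *ᵥ x) = ‖A‖ * (x ⬝ᵥ x) := by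
      rw [smul_mulVec, dotProduct_smul, one_mulVec, smul_eq_mul]
    rw [h1]
    set y : EuclideanSpace ℝ (Fin p) := (WithLp.equiv 2 _).symm x with hy
    set z : EuclideanSpace ℝ (Fin p) := (WithLp.equiv 2 _).symm (A *ᵥ x) with hz
    have h2 : ‖z‖ ≤ ‖A‖ * ‖y‖ := A.l2_opNorm_mulVec y
    have hinner : x ⬝ᵥ (A *ᵥ x) = @inner ℝ _ _ y z := by
      rw [hy, hz, WithLp.equiv_symm_apply, EuclideanSpace.inner_toLp_toLp, hx]
      exact dotProduct_comm _ _
    have hxx : x ⬝ᵥ x = ‖y‖ ^ 2 := by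
      have h3 : @inner ℝ _ _ y y = x ⬝ᵥ x := by
        rw [hy, WithLp.equiv_symm_apply, EuclideanSpace.inner_toLp_toLp, hx]
      rw [← h3, real_inner_self_eq_norm_sq]
    have h4 : @inner ℝ _ _ y z ≤ ‖y‖ * ‖z‖ := real_inner_le_norm y z
    have h5 : ‖y‖ * ‖z‖ ≤ ‖y‖ * (‖A‖ * ‖y‖) :=
      mul_le_mul_of_nonneg_left h2 (norm_nonneg _)
    have h6 : x ⬝ᵥ (A *ᵥ x) ≤ ‖A‖ * (x ⬝ᵥ x) := by
      rw [hinner, hxx]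
      nlinarith [norm_nonneg y]
    linarith

open scoped MatrixOrder in
/-- For PSD `A` with `A ⪯ t • 1`, we get `A * A ⪯ t • A`. -/
private lemma aux_sq_le {A : Matrix (Fin p) (Fin p) ℝ} (hA : A.PosSemidef) {t : ℝ}
    (ht : (t • (1 : Matrix (Fin p) (Fin p) ℝ) - A).PosSemidef) :
    (t • A - A * A).PosSemidef := by
  have h := ht.mul_mul_conjTranspose_same (CFC.sqrt A)
  have hherm : (CFC.sqrt A)ᴴ = CFC.sqrt A :=
    (Matrix.nonneg_iff_posSemidef.mp (CFC.sqrt_nonneg A)).isHermitian.eq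
  rw [hherm] at h
  have hkey : CFC.sqrt A * (t • (1 : Matrix (Fin p) (Fin p) ℝ) - A) * CFC.sqrt A = t • A - A * A := by
    obtain ⟨Q, hQ⟩ : ∃ Q, Q = CFC.sqrt A := ⟨CFC.sqrt A, rfl⟩
    have hsq : Q * Q = A := by rw [hQ]; exact CFC.sqrt_mul_sqrt_self A (Matrix.nonneg_iff_posSemidef.mpr hA)
    rw [← hQ, ← hsq]
    noncomm_ring
  rwa [hkey] at h

private lemma aux_conj_psd {A B : Matrix (Fin p) (Fin p) ℝ} (hA : A.PosSemidef)
    (hB : B.IsHermitian) : (B * A * B).PosSemidef := by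
  have h := hA.mul_mul_conjTranspose_same B
  rwa [hB.eq] at h

end Aux

/-- Loewner shrinkage bounds for the two-batch cross-covariance, from the
proof of Proposition `twobatch_generr_Zonly`. Let `W₁, W₂ ∈ ℝ^{p×p}` be symmetric positive
semidefinite and `α ≥ 0` with `α‖W₁ + W₂‖ ≤ 2` (spectral norm). Set
`Z := (1/2)(W₁ + W₂) − (1/4)α(W₂W₁ + W₁W₂)` and
`Δ := (1/4)[((1/2)αW₁ − I)W₂W₁ + ((1/2)αW₂ − I)W₁W₂]`. Then in the Loewner order,
`−(1/2)‖W₁ + W₂‖·Z ⪯ Δ ⪯ (1/2)‖W₁ + W₂‖·Z`; moreover the upper bound holds with equality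
when `W₁ = W₂ = cI` and `α = 2/c` for some `c > 0`. -/
theorem twobatch_loewner_shrinkage {p : ℕ}
    (W₁ W₂ : Matrix (Fin p) (Fin p) ℝ)
    (hW₁ : W₁.PosSemidef) (hW₂ : W₂.PosSemidef)
    (α : ℝ) (hα : 0 ≤ α) (hstep : α * ‖W₁ + W₂‖ ≤ 2)
    (Z : Matrix (Fin p) (Fin p) ℝ)
    (hZ : Z = (1 / 2 : ℝ) • (W₁ + W₂) - ((1 / 4 : ℝ) * α) • (W₂ * W₁ + W₁ * W₂))
    (Δ : Matrix (Fin p) (Fin p) ℝ)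
    (hΔ : Δ = (1 / 4 : ℝ) •
      (((α / 2) • W₁ - 1) * (W₂ * W₁) + ((α / 2) • W₂ - 1) * (W₁ * W₂))) :
    (Δ + ((1 / 2 : ℝ) * ‖W₁ + W₂‖) • Z).PosSemidef ∧
    (((1 / 2 : ℝ) * ‖W₁ + W₂‖) • Z - Δ).PosSemidef ∧
    (∀ c : ℝ, 0 < c → W₁ = c • (1 : Matrix (Fin p) (Fin p) ℝ) →
      W₂ = c • (1 : Matrix (Fin p) (Fin p) ℝ) → α = 2 / c →
        Δ = ((1 / 2 : ℝ) * ‖W₁ + W₂‖) • Z) := by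
  set s : ℝ := ‖W₁ + W₂‖ with hs
  have hs0 : 0 ≤ s := norm_nonneg _
  have hsα : α * s ≤ 2 := hstep
  set S : Matrix (Fin p) (Fin p) ℝ := W₁ + W₂ with hSdef
  have hS : S.PosSemidef := hW₁.add hW₂
  have hB : (s • (1 : Matrix (Fin p) (Fin p) ℝ) - S).PosSemidef :=
    aux_norm_smul_one_sub hS.isHermitian
  have hB1 : (s • (1 : Matrix (Fin p) (Fin p) ℝ) - W₁).PosSemidef := by
    have := hB.add hW₂
    have heq : s • (1 : Matrix (Fin p) (Fin p) ℝ) - S + W₂ =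
        s • (1 : Matrix (Fin p) (Fin p) ℝ) - W₁ := by
      rw [hSdef]; abel
    rwa [heq] at this
  have hB2 : (s • (1 : Matrix (Fin p) (Fin p) ℝ) - W₂).PosSemidef := by
    have := hB.add hW₁
    have heq : s • (1 : Matrix (Fin p) (Fin p) ℝ) - S + W₁ =
        s • (1 : Matrix (Fin p) (Fin p) ℝ) - W₂ := by
      rw [hSdef]; abel
    rwa [heq] at this
  have hsqW₁ : (s • W₁ - W₁ * W₁).PosSemidef := aux_sq_le hW₁ hB1
  have hsqW₂ : (s • W₂ - W₂ * W₂).PosSemidef := aux_sq_le hW₂ hB2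
  have hsqS : (s • S - S * S).PosSemidef := aux_sq_le hS hB
  have hc1 : (W₁ * (s • (1 : Matrix (Fin p) (Fin p) ℝ) - W₂) * W₁).PosSemidef :=
    aux_conj_psd hB2 hW₁.isHermitian
  have hc2 : (W₂ * (s • (1 : Matrix (Fin p) (Fin p) ℝ) - W₁) * W₂).PosSemidef :=
    aux_conj_psd hB1 hW₂.isHermitian
  have hw1w2w1 : (W₁ * W₂ * W₁).PosSemidef := aux_conj_psd hW₂ hW₁.isHermitian
  have hw2w1w2 : (W₂ * W₁ * W₂).PosSemidef := aux_conj_psd hW₁ hW₂.isHermitian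
  have hD : ((W₁ - W₂) * (W₁ - W₂)).PosSemidef := by
    have hh : (W₁ - W₂).IsHermitian := hW₁.isHermitian.sub hW₂.isHermitian
    have := Matrix.posSemidef_conjTranspose_mul_self (W₁ - W₂)
    rwa [hh.eq] at this
  have hαs8 : 0 ≤ α / 8 := by linarith
  have hd : 0 ≤ (2 - s * α) / 8 := by nlinarith
  have hcc : 0 ≤ (s * α + 2) / 16 := by nlinarith
  have hss : 0 ≤ s * (2 - s * α) / 16 := by nlinarith
  refine ⟨?_, ?_, ?_⟩
  · -- lower bound: Δ + (s/2) • Z ⪰ 0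
    have key : Δ + ((1 / 2 : ℝ) * s) • Z =
        (α / 8) • (W₁ * W₂ * W₁) + (α / 8) • (W₂ * W₁ * W₂) +
        ((s * α + 2) / 16) • (s • S - S * S) + (s * (2 - s * α) / 16) • S +
        ((s * α + 2) / 16) • ((W₁ - W₂) * (W₁ - W₂)) := by
      rw [hZ, hΔ, hSdef]
      simp only [Matrix.mul_sub, Matrix.sub_mul, Matrix.mul_add, Matrix.add_mul,
        Matrix.smul_mul, Matrix.mul_smul, Matrix.one_mul, Matrix.mul_one, smul_sub, smul_add,
        smul_smul, Matrix.mul_assoc]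
      module
    rw [key]
    exact ((((aux_smul_psd hαs8 hw1w2w1).add (aux_smul_psd hαs8 hw2w1w2)).add
      (aux_smul_psd hcc hsqS)).add (aux_smul_psd hss hS)).add (aux_smul_psd hcc hD)
  · -- upper bound: (s/2) • Z - Δ ⪰ 0
    have key : ((1 / 2 : ℝ) * s) • Z - Δ =
        ((2 - s * α) / 8) • (S * S) +
        (α / 8) • (W₁ * (s • (1 : Matrix (Fin p) (Fin p) ℝ) - W₂) * W₁) +
        (α / 8) • (W₂ * (s • (1 : Matrix (Fin p) (Fin p) ℝ) - W₁) * W₂) +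
        (1 / 4 : ℝ) • (s • W₁ - W₁ * W₁) + (1 / 4 : ℝ) • (s • W₂ - W₂ * W₂) := by
      rw [hZ, hΔ, hSdef]
      simp only [Matrix.mul_sub, Matrix.sub_mul, Matrix.mul_add, Matrix.add_mul,
        Matrix.smul_mul, Matrix.mul_smul, Matrix.one_mul, Matrix.mul_one, smul_sub, smul_add,
        smul_smul, Matrix.mul_assoc]
      module
    have hSS : (S * S).PosSemidef := by
      have := Matrix.posSemidef_conjTranspose_mul_self S
      rwa [hS.isHermitian.eq] at this
    rw [key]
    exact ((((aux_smul_psd hd hSS).add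
      (aux_smul_psd hαs8 hc1)).add (aux_smul_psd hαs8 hc2)).add
      (aux_smul_psd (by norm_num) hsqW₁)).add (aux_smul_psd (by norm_num) hsqW₂)
  · -- equality case
    intro c hc h1 h2 hα'
    have hscal : 2 / c / 2 * c = 1 := by field_simp
    have hone1 : ((α / 2) • W₁ - 1 : Matrix (Fin p) (Fin p) ℝ) = 0 := by
      rw [h1, hα', smul_smul, hscal, one_smul, sub_self]
    have hone2 : ((α / 2) • W₂ - 1 : Matrix (Fin p) (Fin p) ℝ) = 0 := by
      rw [h2, hα', smul_smul, hscal, one_smul, sub_self]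
    have hΔ0 : Δ = 0 := by
      rw [hΔ, hone1, hone2, Matrix.zero_mul, Matrix.zero_mul, add_zero, smul_zero]
    have hZ0 : Z = 0 := by
      have hm : (c • (1 : Matrix (Fin p) (Fin p) ℝ)) * (c • 1) = (c * c) • 1 := by
        rw [Matrix.smul_mul, Matrix.mul_smul, Matrix.one_mul, smul_smul]
      rw [hZ, hSdef, h1, h2, hα', hm, ← add_smul, ← add_smul, smul_smul, smul_smul,
        ← sub_smul]
      convert zero_smul ℝ (1 : Matrix (Fin p) (Fin p) ℝ) using 2
      field_simp
      ring
    rw [hΔ0, hZ0, smul_zero]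
end
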